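/- arXiv:math/0608575 — 3 statements merged into one kernel-verified Lean document; each statement's English description precedes it below -/
import Mathlib

section
/- The group G = S(ℕ) has the SUC fixed point property: every nonempty compact SUC G-flow X contains a point x with g•x = x for all g ∈ G. -/
open Filter Topology

/-- The Polish group `S(ℕ)` of permutations of `ℕ` with the topology of pointwise
convergence (the subspace topology inherited from `ℕ^ℕ` with `ℕ` discrete). -/
instance : TopologicalSpace (Equiv.Perm ℕ) :=
  TopologicalSpace.induced (fun σ : Equiv.Perm ℕ => (σ : ℕ → ℕ)) Pi.topologicalSpace

variable (G : Type) [Group G] [TopologicalSpace G]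

/-- A compact (more generally, uniform) `G`-flow is strongly uniformly continuous (SUC). -/
def IsSUCFlow (X : Type) [UniformSpace X] [MulAction G X] : Prop :=
  ∀ x₀ : X, ∀ ε ∈ uniformity X, ∃ U ∈ nhds (1 : G), ∀ g : G, ∀ u ∈ U,
    (g • u • x₀, g • x₀) ∈ ε

section Auxiliary

set_option linter.unusedSectionVars false

/-- Any finite partial injection of `ℕ` extends to a permutation. -/
lemma exists_perm_agree : ∀ (F : Finset ℕ) (f : ℕ → ℕ), Set.InjOn f F →
    ∃ σ : Equiv.Perm ℕ, ∀ i ∈ F, σ i = f i := by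
  intro F
  induction F using Finset.induction with
  | empty => exact fun f _ => ⟨1, by simp⟩
  | @insert a F ha ih =>
    intro f hf
    obtain ⟨σ₀, hσ₀⟩ := ih f (hf.mono (by intro x hx; simp at hx ⊢; exact Or.inr hx))
    by_cases h : σ₀ a = f a
    · exact ⟨σ₀, by
        intro i hi
        rcases Finset.mem_insert.mp hi with rfl | hi
        · exact h
        · exact hσ₀ i hi⟩
    · refine ⟨(Equiv.swap (σ₀ a) (f a)) * σ₀, ?_⟩
      intro i hi
      rcases Finset.mem_insert.mp hi with rfl | hi'
      · simp [Equiv.Perm.mul_apply]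
      · have h1 : σ₀ i = f i := hσ₀ i hi'
        have hia : i ≠ a := by rintro rfl; exact ha hi'
        have h2 : σ₀ i ≠ σ₀ a := fun hc => hia (σ₀.injective hc)
        have h3 : σ₀ i ≠ f a := by
          rw [h1]
          exact fun hc => hia (hf (by simp [hi']) (by simp) hc)
        rw [Equiv.Perm.mul_apply, Equiv.swap_apply_of_ne_of_ne h2 h3, h1]

/-- Basic neighborhoods in `ℕ^ℕ`. -/
lemma mem_nhds_fun {f : ℕ → ℕ} {S : Set (ℕ → ℕ)} (hS : S ∈ 𝓝 f) :
    ∃ F : Finset ℕ, {g : ℕ → ℕ | ∀ i ∈ F, g i = f i} ⊆ S := by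
  rw [nhds_pi, Filter.mem_pi] at hS
  obtain ⟨I, hIfin, t, ht, hsub⟩ := hS
  refine ⟨hIfin.toFinset, ?_⟩
  intro g hg
  apply hsub
  intro i hi
  have h1 : g i = f i := hg i (hIfin.mem_toFinset.mpr hi)
  rw [h1]
  have := ht i
  rwa [nhds_discrete, Filter.mem_pure] at this

/-- Neighborhoods of `1` in `S(ℕ)` contain pointwise stabilizers of finite sets. -/
lemma mem_nhds_one_perm {U : Set (Equiv.Perm ℕ)} (hU : U ∈ 𝓝 (1 : Equiv.Perm ℕ)) :
    ∃ F : Finset ℕ, ∀ σ : Equiv.Perm ℕ, (∀ i ∈ F, σ i = i) → σ ∈ U := by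
  rw [nhds_induced] at hU
  obtain ⟨S, hS, hSU⟩ := hU
  obtain ⟨F, hF⟩ := mem_nhds_fun (f := id) (by simpa using hS)
  exact ⟨F, fun σ hσ => hSU (hF (by intro i hi; exact hσ i hi))⟩

lemma basic_mem_nhds (H : ℕ → ℕ) (F : Finset ℕ) :
    {g : ℕ → ℕ | ∀ i ∈ F, g i = H i} ∈ 𝓝 H := by
  rw [nhds_pi, Filter.mem_pi]
  refine ⟨F, F.finite_toSet, fun i => {H i}, fun i => ?_, ?_⟩
  · rw [nhds_discrete, Filter.mem_pure]; rfl
  · intro g hg i hi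
    exact hg i hi

variable {X : Type} [UniformSpace X] [MulAction (Equiv.Perm ℕ) X]

/-- `F` is a `V`-modulus at `x`: permutations fixing `F` pointwise move `x` by at most `V`,
uniformly over all left translates. -/
def Valid (V : Set (X × X)) (F : Finset ℕ) (x : X) : Prop :=
  ∀ h u : Equiv.Perm ℕ, (∀ i ∈ F, u i = i) → ((h * u) • x, h • x) ∈ V

lemma Valid.conj {V : Set (X × X)} {F : Finset ℕ} {x : X} (g : Equiv.Perm ℕ)
    (hv : Valid V F (g • x)) : Valid V (F.image ⇑g⁻¹) x := by
  intro h u hu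
  have hu' : ∀ i ∈ F, (g * u * g⁻¹) i = i := by
    intro i hi
    have : u (g⁻¹ i) = g⁻¹ i := hu _ (Finset.mem_image_of_mem _ hi)
    rw [Equiv.Perm.mul_apply, Equiv.Perm.mul_apply, this, Equiv.Perm.inv_def, Equiv.apply_symm_apply]
  have hkey := hv (h * g⁻¹) (g * u * g⁻¹) hu'
  have e1 : (h * g⁻¹ * (g * u * g⁻¹)) • g • x = (h * u) • x := by
    rw [← mul_smul]; congr 1; group
  have e2 : (h * g⁻¹) • g • x = h • x := by
    rw [← mul_smul]; congr 1; group
  rwa [e1, e2] at hkey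

/-- The key combinatorial fact: if `x` has two disjoint moduli, then every group element
moves `x` (and all its translates) by at most `V ∘ V ∘ V`. -/
lemma valid_inter_empty {V : Set (X × X)} {A B : Finset ℕ} {z : X}
    (hA : Valid V A z) (hB : Valid V B z) (hAB : ∀ q ∈ A, q ∉ B) :
    ∀ h u : Equiv.Perm ℕ, ((h * u) • z, h • z) ∈ SetRel.comp (SetRel.comp V V) V := by
  classical
  intro h u
  set K : ℕ := (A ∪ B ∪ A.image ⇑u).sup id + 1 with hK
  have hbound : ∀ y ∈ A ∪ B ∪ A.image ⇑u, y < K := by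
    intro y hy
    exact Nat.lt_succ_of_le (Finset.le_sup (f := id) hy)
  have hAK : ∀ q ∈ A, q < K := fun q hq => hbound q (by simp [hq])
  have hBK : ∀ q ∈ B, q < K := fun q hq => hbound q (by simp [hq])
  have huK : ∀ q ∈ A, u q < K := fun q hq => hbound (u q) (by
    simp only [Finset.mem_union]
    exact Or.inr (Finset.mem_image_of_mem _ hq))
  set β : ℕ → ℕ := fun x => if x ∈ B then x else (if u x ∈ B then x + K else u x) with hβ
  have hβinj : Set.InjOn β (A ∪ B : Finset ℕ) := by
    intro x hx y hy hxy
    simp only [Finset.coe_union, Set.mem_union, Finset.mem_coe] at hx hy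
    have hx' : x ∈ B ∨ x ∈ A := by
      rcases hx with hx | hx
      · exact Or.inr hx
      · exact Or.inl hx
    have hy' : y ∈ B ∨ y ∈ A := by
      rcases hy with hy | hy
      · exact Or.inr hy
      · exact Or.inl hy
    rcases hx' with hxB | hxA <;> rcases hy' with hyB | hyA
    · simpa [hβ, hxB, hyB] using hxy
    · have hyB : y ∉ B := hAB y hyA
      by_cases hyu : u y ∈ B
      · exfalso
        have h2 : x = y + K := by simpa [hβ, hxB, hyB, hyu] using hxy
        have h3 : x < K := hBK x hxB
        omega
      · exfalso
        have hx2 : x = u y := by simpa [hβ, hxB, hyB, hyu] using hxy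
        exact hyu (hx2 ▸ hxB)
    · have hxB : x ∉ B := hAB x hxA
      by_cases hxu : u x ∈ B
      · exfalso
        have h2 : y + 0 = x + K := by simpa [hβ, hxB, hyB, hxu] using hxy.symm
        have h3 : y < K := hBK y hyB
        omega
      · exfalso
        have hy2 : y = u x := by simpa [hβ, hxB, hyB, hxu] using hxy.symm
        exact hxu (hy2 ▸ hyB)
    · have hxB : x ∉ B := hAB x hxA
      have hyB : y ∉ B := hAB y hyA
      by_cases hxu : u x ∈ B <;> by_cases hyu : u y ∈ B
      · have h2 : x + K = y + K := by simpa [hβ, hxB, hyB, hxu, hyu] using hxy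
        omega
      · exfalso
        have h2 : x + K = u y := by simpa [hβ, hxB, hyB, hxu, hyu] using hxy
        have := huK y hyA
        omega
      · exfalso
        have h2 : u x = y + K := by simpa [hβ, hxB, hyB, hxu, hyu] using hxy
        have := huK x hxA
        omega
      · have h2 : u x = u y := by simpa [hβ, hxB, hyB, hxu, hyu] using hxy
        exact u.injective h2
  obtain ⟨b, hb⟩ := exists_perm_agree (A ∪ B) β hβinj
  have hbB : ∀ x ∈ B, b x = x := by
    intro x hx
    rw [hb x (by simp [hx])]
    simp [hβ, hx]
  have hbA : ∀ q ∈ A, b q = if u q ∈ B then q + K else u q := by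
    intro q hq
    rw [hb q (by simp [hq])]
    simp [hβ, hAB q hq]
  set T : Finset ℕ := (A.filter fun q => u q ∈ B).image (· + K) with hT
  have hTmem : ∀ x ∈ T, K ≤ x := by
    intro x hx
    simp only [hT, Finset.mem_image] at hx
    obtain ⟨q, _, rfl⟩ := hx
    omega
  have hnotT : ∀ x : ℕ, x < K → x ∉ T := fun x hx hmem => absurd (hTmem x hmem) (by omega)
  set Da : Finset ℕ := A ∪ T ∪ (A.filter fun q => u q ∉ B).image ⇑u with hDa
  set α : ℕ → ℕ := fun x => if x ∈ T then u (x - K) else x with hα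
  have hαinj : Set.InjOn α Da := by
    intro x hx y hy hxy
    have hmem : ∀ w : ℕ, w ∈ Da → (w ∈ T ∨ (w < K ∧ w ∉ B)) := by
      intro w hw
      simp only [hDa, Finset.mem_union] at hw
      rcases hw with (hw | hw) | hw
      · exact Or.inr ⟨hAK w hw, hAB w hw⟩
      · exact Or.inl hw
      · simp only [Finset.mem_image, Finset.mem_filter] at hw
        obtain ⟨q, ⟨hqA, hqB⟩, rfl⟩ := hw
        exact Or.inr ⟨huK q hqA, hqB⟩
    rcases hmem x hx with hxT | ⟨hxK, hxB⟩ <;> rcases hmem y hy with hyT | ⟨hyK, hyB⟩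
    · simp only [hα, hxT, hyT, if_pos] at hxy
      simp only [hT, Finset.mem_image, Finset.mem_filter] at hxT hyT
      obtain ⟨q, ⟨hqA, hquB⟩, rfl⟩ := hxT
      obtain ⟨q', ⟨hq'A, hq'uB⟩, rfl⟩ := hyT
      have h2 : u q = u q' := by simpa using hxy
      have := u.injective h2
      omega
    · exfalso
      simp only [hα] at hxy
      rw [if_pos hxT, if_neg (hnotT y hyK)] at hxy
      simp only [hT, Finset.mem_image, Finset.mem_filter] at hxT
      obtain ⟨q, ⟨hqA, hquB⟩, rfl⟩ := hxT
      have h2 : u q = y := by simpa using hxy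
      exact hyB (h2 ▸ hquB)
    · exfalso
      simp only [hα] at hxy
      rw [if_neg (hnotT x hxK), if_pos hyT] at hxy
      simp only [hT, Finset.mem_image, Finset.mem_filter] at hyT
      obtain ⟨q, ⟨hqA, hquB⟩, rfl⟩ := hyT
      have h2 : x = u q := by simpa using hxy
      exact hxB (h2 ▸ hquB)
    · simp only [hα] at hxy
      rwa [if_neg (hnotT x hxK), if_neg (hnotT y hyK)] at hxy
  obtain ⟨a, ha⟩ := exists_perm_agree Da α hαinj
  have haA : ∀ x ∈ A, a x = x := by
    intro x hx
    rw [ha x (by simp [hDa, hx])]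
    simp [hα, hnotT x (hAK x hx)]
  have haT : ∀ q ∈ A, u q ∈ B → a (q + K) = u q := by
    intro q hq hqu
    have hqT : q + K ∈ T := by
      simp only [hT, Finset.mem_image, Finset.mem_filter]
      exact ⟨q, ⟨hq, hqu⟩, rfl⟩
    rw [ha (q + K) (by simp [hDa, hqT])]
    simp [hα, hqT]
  have hau : ∀ q ∈ A, u q ∉ B → a (u q) = u q := by
    intro q hq hqu
    have hqD : u q ∈ Da := by
      simp only [hDa, Finset.mem_union, Finset.mem_image, Finset.mem_filter]
      exact Or.inr ⟨q, ⟨hq, hqu⟩, rfl⟩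
    rw [ha (u q) hqD]
    simp [hα, hnotT (u q) (huK q hq)]
  have hab : ∀ q ∈ A, a (b q) = u q := by
    intro q hq
    rw [hbA q hq]
    by_cases hqu : u q ∈ B
    · rw [if_pos hqu]; exact haT q hq hqu
    · rw [if_neg hqu]; exact hau q hq hqu
  set r : Equiv.Perm ℕ := (a * b)⁻¹ * u with hr
  have hrA : ∀ q ∈ A, r q = q := by
    intro q hq
    have h1 : (a * b) q = u q := by
      rw [Equiv.Perm.mul_apply]; exact hab q hq
    have h2 : (a * b)⁻¹ ((a * b) q) = (a * b)⁻¹ (u q) := by rw [h1]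
    rw [Equiv.Perm.inv_def, Equiv.symm_apply_apply] at h2
    simp only [hr, Equiv.Perm.mul_apply]
    exact h2.symm
  have hdecomp : h * u = ((h * a) * b) * r := by
    simp only [hr]; group
  have m1 : (((h * a * b) * r) • z, (h * a * b) • z) ∈ V := hA (h * a * b) r hrA
  have m2 : (((h * a) * b) • z, (h * a) • z) ∈ V := hB (h * a) b hbB
  have m3 : ((h * a) • z, h • z) ∈ V := hA h a haA
  rw [hdecomp]
  exact ⟨(h * a) • z, ⟨(h * a * b) • z, m1, m2⟩, m3⟩

variable [CompactSpace X] [T2Space X] [Nonempty X] [ContinuousSMul (Equiv.Perm ℕ) X]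

lemma valid_isClosed {V : Set (X × X)} (hV : IsClosed V) (F : Finset ℕ) :
    IsClosed {x : X | Valid V F x} := by
  have hrw : {x : X | Valid V F x} =
      ⋂ (h : Equiv.Perm ℕ), ⋂ (u : Equiv.Perm ℕ), ⋂ (_ : ∀ i ∈ F, u i = i),
        {x : X | ((h * u) • x, h • x) ∈ V} := by
    ext x; simp [Valid]
  rw [hrw]
  refine isClosed_iInter fun h => isClosed_iInter fun u => isClosed_iInter fun _ => ?_
  exact hV.preimage ((continuous_const_smul _).prodMk (continuous_const_smul _))

/-- Existence of a minimal subflow. -/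
lemma exists_minimal_subflow :
    ∃ M : Set X, M.Nonempty ∧ IsClosed M ∧ (∀ g : Equiv.Perm ℕ, ∀ x ∈ M, g • x ∈ M) ∧
      ∀ A : Set X, A.Nonempty → IsClosed A → (∀ g : Equiv.Perm ℕ, ∀ x ∈ A, g • x ∈ A) →
        A ⊆ M → A = M := by
  set S : Set (Set X) :=
    {A | A.Nonempty ∧ IsClosed A ∧ ∀ g : Equiv.Perm ℕ, ∀ x ∈ A, g • x ∈ A} with hS
  have hchain : ∀ c ⊆ S, IsChain (· ⊆ ·) c → c.Nonempty → ∃ lb ∈ S, ∀ s ∈ c, lb ⊆ s := by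
    intro c hcS hchain hcne
    haveI : Nonempty c := hcne.to_subtype
    have hdir : Directed (· ⊇ ·) (fun A : c => (A : Set X)) := by
      intro A B
      rcases eq_or_ne (A : Set X) (B : Set X) with h | h
      · exact ⟨A, subset_rfl, h.le⟩
      · rcases hchain A.2 B.2 (by exact fun hc => h (by rw [hc])) with h1 | h1
        · exact ⟨A, subset_rfl, h1⟩
        · exact ⟨B, h1, subset_rfl⟩
    have hne : ∀ A : c, (A : Set X).Nonempty := fun A => (hcS A.2).1
    have hcomp : ∀ A : c, IsCompact (A : Set X) := fun A => (hcS A.2).2.1.isCompact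
    have hcl : ∀ A : c, IsClosed (A : Set X) := fun A => (hcS A.2).2.1
    have hlbne : (⋂ A : c, (A : Set X)).Nonempty :=
      IsCompact.nonempty_iInter_of_directed_nonempty_isCompact_isClosed _ hdir hne hcomp hcl
    refine ⟨⋂ A : c, (A : Set X), ⟨hlbne, isClosed_iInter fun A => hcl A, ?_⟩, ?_⟩
    · intro g x hx
      rw [Set.mem_iInter] at hx ⊢
      exact fun A => (hcS A.2).2.2 g x (hx A)
    · intro s hs
      exact Set.iInter_subset (fun A : c => (A : Set X)) ⟨s, hs⟩
  have huniv : Set.univ ∈ S := ⟨Set.univ_nonempty, isClosed_univ, fun _ _ _ => Set.mem_univ _⟩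
  obtain ⟨M, -, hMS, hMmin⟩ := zorn_superset_nonempty S hchain Set.univ huniv
  exact ⟨M, hMS.1, hMS.2.1, hMS.2.2,
    fun A hAne hAcl hAinv hAM => le_antisymm hAM (hMmin ⟨hAne, hAcl, hAinv⟩ hAM)⟩

/-- Main step: for every entourage `W` there is a point which every group element moves
by at most `W`. -/
lemma exists_almost_fixed (hSUC : IsSUCFlow (Equiv.Perm ℕ) X)
    {W : Set (X × X)} (hW : W ∈ uniformity X) :
    ∃ z : X, ∀ u : Equiv.Perm ℕ, (u • z, z) ∈ W ∧ (z, u • z) ∈ W := by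
  classical
  -- a closed entourage whose triple composition is inside W
  have h3 : ∃ V₀ ∈ uniformity X, SetRel.comp V₀ (SetRel.comp V₀ V₀) ⊆ W := by
    have := comp_le_uniformity3 (α := X) hW
    rwa [Filter.mem_lift'_sets] at this
    intro s t hst
    exact SetRel.comp_subset_comp hst (SetRel.comp_subset_comp hst hst)
  obtain ⟨V₀, hV₀, hV₀W⟩ := h3
  obtain ⟨V, ⟨hV, hVc⟩, hVV₀⟩ := uniformity_hasBasis_closed.mem_iff.mp hV₀
  -- minimal subflow
  obtain ⟨M, hMne, hMcl, hMinv, hMmin⟩ := exists_minimal_subflow (X := X)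
  obtain ⟨y₀, hy₀⟩ := hMne
  have hMcomp : IsCompact M := hMcl.isCompact
  haveI : CompactSpace M := isCompact_iff_compactSpace.mp hMcomp
  haveI : Nonempty M := ⟨⟨y₀, hy₀⟩⟩
  -- Baire category on M
  have hDcl : ∀ F : Finset ℕ, IsClosed {y : M | Valid V F (y : X)} := fun F =>
    (valid_isClosed hVc F).preimage continuous_subtype_val
  have hDcover : ⋃ F : Finset ℕ, {y : M | Valid V F (y : X)} = Set.univ := by
    ext y
    simp only [Set.mem_iUnion, Set.mem_univ, iff_true, Set.mem_setOf_eq]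
    obtain ⟨U, hU, hUs⟩ := hSUC (y : X) V hV
    obtain ⟨F, hF⟩ := mem_nhds_one_perm hU
    exact ⟨F, fun h u hu => by simpa [mul_smul] using hUs h u (hF u hu)⟩
  obtain ⟨F₀, hF₀⟩ := nonempty_interior_of_iUnion_of_closed hDcl hDcover
  obtain ⟨y₁, hy₁⟩ := hF₀
  -- translate the interior to an open set in X
  obtain ⟨O, hOopen, hOeq⟩ := isOpen_induced_iff.mp
    (isOpen_interior (s := {y : M | Valid V F₀ (y : X)}))
  have hy₁O : (y₁ : X) ∈ O := by
    have : y₁ ∈ Subtype.val ⁻¹' O := by rw [hOeq]; exact hy₁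
    exact this
  have hOvalid : ∀ x : X, x ∈ O → x ∈ M → Valid V F₀ x := by
    intro x hxO hxM
    have : (⟨x, hxM⟩ : M) ∈ Subtype.val ⁻¹' O := hxO
    rw [hOeq] at this
    exact interior_subset this
  -- minimality: orbits are dense, giving a finite cover by translates of O
  have hcover : M ⊆ ⋃ g : Equiv.Perm ℕ, (fun x : X => g • x) ⁻¹' O := by
    intro y hyM
    have horbsub : {z : X | ∃ g : Equiv.Perm ℕ, g • y = z} ⊆ M := by
      rintro z ⟨g, rfl⟩
      exact hMinv g y hyM
    have horbinv : ∀ g : Equiv.Perm ℕ, ∀ x ∈ closure {z : X | ∃ g : Equiv.Perm ℕ, g • y = z},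
        g • x ∈ closure {z : X | ∃ g : Equiv.Perm ℕ, g • y = z} := by
      intro g
      have hmt : Set.MapsTo (fun x : X => g • x) {z : X | ∃ g : Equiv.Perm ℕ, g • y = z}
          {z : X | ∃ g : Equiv.Perm ℕ, g • y = z} := by
        rintro z ⟨g', rfl⟩
        exact ⟨g * g', mul_smul g g' y⟩
      exact fun x hx => hmt.closure (continuous_const_smul g) hx
    have hclM : closure {z : X | ∃ g : Equiv.Perm ℕ, g • y = z} = M :=
      hMmin _ ⟨y, subset_closure ⟨1, one_smul _ y⟩⟩ isClosed_closure horbinv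
        (closure_minimal horbsub hMcl)
    have hy₁cl : (y₁ : X) ∈ closure {z : X | ∃ g : Equiv.Perm ℕ, g • y = z} := by
      rw [hclM]; exact y₁.2
    rw [mem_closure_iff] at hy₁cl
    obtain ⟨z, hzO, g, rfl⟩ := hy₁cl O hOopen hy₁O
    exact Set.mem_iUnion.mpr ⟨g, hzO⟩
  obtain ⟨𝔾, h𝔾⟩ := hMcomp.elim_finite_subcover _
    (fun g : Equiv.Perm ℕ => hOopen.preimage (continuous_const_smul g)) hcover
  -- the bound N
  set N : ℕ := 𝔾.sup (fun g : Equiv.Perm ℕ => (F₀.image ⇑g⁻¹).sup id) with hN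
  -- SUC modulus at y₀
  obtain ⟨U₀, hU₀, hU₀s⟩ := hSUC y₀ V hV
  obtain ⟨Fb, hFb⟩ := mem_nhds_one_perm hU₀
  have hvFb : Valid V Fb y₀ :=
    fun h u hu => by simpa [mul_smul] using hU₀s h u (hFb u hu)
  -- the shift
  set H : ℕ → ℕ := fun n => n + (N + 1) with hH
  have hHinj : Function.Injective H := fun x y hxy => by simpa [hH] using hxy
  set A : Finset ℕ := Fb.image H with hA
  -- the filter of permutations converging to H, pushed to X
  set L : Filter (Equiv.Perm ℕ) :=
    Filter.comap (fun σ : Equiv.Perm ℕ => (σ : ℕ → ℕ)) (𝓝 H) with hL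
  haveI hLne : L.NeBot := by
    rw [hL, Filter.comap_neBot_iff]
    intro S hS
    obtain ⟨F, hF⟩ := mem_nhds_fun hS
    obtain ⟨σ, hσ⟩ := exists_perm_agree F H (hHinj.injOn)
    exact ⟨σ, hF (fun i hi => hσ i hi)⟩
  set φ : Equiv.Perm ℕ → X := fun σ => σ • y₀ with hφ
  have hφM : Filter.map φ L ≤ 𝓟 M := by
    rw [Filter.le_principal_iff, Filter.mem_map]
    have : (φ ⁻¹' M) = Set.univ := by
      ext σ
      simp only [Set.mem_preimage, Set.mem_univ, iff_true, hφ]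
      exact hMinv σ y₀ hy₀
    rw [this]
    exact Filter.univ_mem
  obtain ⟨z, hzM, hz⟩ := hMcomp.exists_clusterPt hφM
  -- z has the transported modulus A = H(Fb)
  have hvalidA : Valid V A z := by
    intro h u hu
    have hWcl : IsClosed {x : X | ((h * u) • x, h • x) ∈ V} :=
      hVc.preimage ((continuous_const_smul _).prodMk (continuous_const_smul _))
    set Sb : Set (Equiv.Perm ℕ) :=
      (fun σ : Equiv.Perm ℕ => (σ : ℕ → ℕ)) ⁻¹' {g : ℕ → ℕ | ∀ i ∈ Fb, g i = H i} with hSb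
    have hSbL : Sb ∈ L := Filter.preimage_mem_comap (basic_mem_nhds H Fb)
    have himg : φ '' Sb ⊆ {x : X | ((h * u) • x, h • x) ∈ V} := by
      rintro _ ⟨σ, hσ, rfl⟩
      have hσ' : ∀ i ∈ Fb, σ i = H i := hσ
      set w : Equiv.Perm ℕ := σ⁻¹ * u * σ with hw
      have hwF : ∀ i ∈ Fb, w i = i := by
        intro i hi
        have h1 : σ i = H i := hσ' i hi
        have h2 : u (H i) = H i := hu (H i) (Finset.mem_image_of_mem H hi)
        simp only [hw, Equiv.Perm.mul_apply]
        rw [h1, h2, ← h1, Equiv.Perm.inv_def, Equiv.symm_apply_apply]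
      have hkey := hvFb (h * σ) w hwF
      have e1 : h * σ * w = h * u * σ := by rw [hw]; group
      rw [e1] at hkey
      simpa only [hφ, Set.mem_setOf_eq, ← mul_smul, mul_assoc] using hkey
    have hzcl : z ∈ closure (φ '' Sb) := by
      rw [mem_closure_iff_clusterPt]
      exact hz.mono (Filter.le_principal_iff.mpr (Filter.image_mem_map hSbL))
    exact closure_minimal himg hWcl hzcl
  -- z has a modulus contained in [0, N]
  have hzO : ∃ g ∈ 𝔾, g • z ∈ O := by
    have := h𝔾 hzM
    simp only [Set.mem_iUnion, Set.mem_preimage] at this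
    obtain ⟨g, hg𝔾, hgz⟩ := this
    exact ⟨g, hg𝔾, hgz⟩
  obtain ⟨g, hg𝔾, hgzO⟩ := hzO
  have hvalidB : Valid V (F₀.image ⇑g⁻¹) z :=
    Valid.conj g (hOvalid (g • z) hgzO (hMinv g z hzM))
  set B : Finset ℕ := F₀.image ⇑g⁻¹ with hB
  have hdisj : ∀ q ∈ A, q ∉ B := by
    intro q hqA hqB
    have h1 : N + 1 ≤ q := by
      simp only [hA, Finset.mem_image] at hqA
      obtain ⟨i, _, rfl⟩ := hqA
      simp [hH]
    have h2 : q ≤ N := by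
      have : (F₀.image ⇑g⁻¹).sup id ≤ N := Finset.le_sup (f := fun g : Equiv.Perm ℕ =>
        (F₀.image ⇑g⁻¹).sup id) hg𝔾
      have h3 : q ≤ (F₀.image ⇑g⁻¹).sup id := Finset.le_sup (f := id) hqB
      omega
    omega
  have hfinal := valid_inter_empty hvalidA hvalidB hdisj
  refine ⟨z, fun u => ⟨?_, ?_⟩⟩
  · have := hfinal 1 u
    simp only [one_mul, one_smul] at this
    exact hV₀W (by
      rw [← SetRel.comp_assoc]
      exact SetRel.comp_subset_comp (SetRel.comp_subset_comp hVV₀ hVV₀) hVV₀ this)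
  · have := hfinal u u⁻¹
    simp only [mul_inv_cancel, one_smul] at this
    exact hV₀W (by
      rw [← SetRel.comp_assoc]
      exact SetRel.comp_subset_comp (SetRel.comp_subset_comp hVV₀ hVV₀) hVV₀ this)

end Auxiliary

/-- `S(ℕ)` has the SUC fixed point property: every nonempty compact SUC
`S(ℕ)`-flow has a fixed point. -/
theorem statement17 (X : Type) [UniformSpace X] [CompactSpace X] [T2Space X] [Nonempty X]
    [MulAction (Equiv.Perm ℕ) X] [ContinuousSMul (Equiv.Perm ℕ) X]
    (hSUC : IsSUCFlow (Equiv.Perm ℕ) X) :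
    ∃ x : X, ∀ σ : Equiv.Perm ℕ, σ • x = x := by
  classical
  set C : Set (X × X) → Set X :=
    fun V => {x : X | ∀ u : Equiv.Perm ℕ, (u • x, x) ∈ V ∧ (x, u • x) ∈ V} with hC
  set ι : Type := {V : Set (X × X) // V ∈ uniformity X ∧ IsClosed V} with hι
  haveI : Nonempty ι := ⟨⟨Set.univ, Filter.univ_mem, isClosed_univ⟩⟩
  have hCcl : ∀ i : ι, IsClosed (C i.1) := by
    intro i
    have hrw : C i.1 = ⋂ u : Equiv.Perm ℕ,
        ({x : X | (u • x, x) ∈ i.1} ∩ {x : X | (x, u • x) ∈ i.1}) := by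
      ext x; simp [hC, forall_and]
    rw [hrw]
    refine isClosed_iInter fun u => IsClosed.inter ?_ ?_
    · exact i.2.2.preimage ((continuous_const_smul _).prodMk continuous_id)
    · exact i.2.2.preimage (continuous_id.prodMk (continuous_const_smul _))
  have hCne : ∀ i : ι, (C i.1).Nonempty := by
    intro i
    obtain ⟨z, hzz⟩ := exists_almost_fixed hSUC i.2.1
    exact ⟨z, hzz⟩
  have hdir : Directed (· ⊇ ·) (fun i : ι => C i.1) := by
    intro i j
    refine ⟨⟨i.1 ∩ j.1, Filter.inter_mem i.2.1 j.2.1, i.2.2.inter j.2.2⟩, ?_, ?_⟩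
    · intro x hx u
      exact ⟨((hx u).1).1, ((hx u).2).1⟩
    · intro x hx u
      exact ⟨((hx u).1).2, ((hx u).2).2⟩
  have hinter := IsCompact.nonempty_iInter_of_directed_nonempty_isCompact_isClosed
    (fun i : ι => C i.1) hdir hCne (fun i => (hCcl i).isCompact) hCcl
  obtain ⟨x, hx⟩ := hinter
  refine ⟨x, fun σ => ?_⟩
  apply eq_of_uniformity
  intro V hV
  obtain ⟨V', ⟨hV', hV'c⟩, hsub⟩ := uniformity_hasBasis_closed.mem_iff.mp hV
  exact hsub ((Set.mem_iInter.mp hx ⟨V', hV', hV'c⟩) σ).1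
end

section
/- Let G = H(C) be the homeomorphism group of the Cantor space. There exists a bounded function f : G → ℝ which is both left and right uniformly continuous but is not an SUC function; in particular SUC(G) is a proper subalgebra of UC(G). -/
open Filter Topology

/-- The Cantor space. -/
abbrev CantorSpace : Type := ℕ → Bool

/-- The group of self-homeomorphisms of a topological space, under composition. -/
instance homeoGroup {X : Type*} [TopologicalSpace X] : Group (X ≃ₜ X) where
  mul f g := g.trans f
  one := Homeomorph.refl X
  inv := Homeomorph.symm
  mul_assoc a b c := Homeomorph.ext fun _ => rfl
  one_mul f := Homeomorph.ext fun _ => rfl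
  mul_one f := Homeomorph.ext fun _ => rfl
  inv_mul_cancel f := Homeomorph.ext fun x => f.symm_apply_apply x

/-- The compact-open topology (= topology of uniform convergence) on the homeomorphism
group `H(C)` of the Cantor space. -/
instance : TopologicalSpace (CantorSpace ≃ₜ CantorSpace) :=
  TopologicalSpace.induced (fun h => (h : C(CantorSpace, CantorSpace)))
    ContinuousMap.compactOpen

open Set
open scoped Uniformity

namespace Aux

abbrev HC := CantorSpace ≃ₜ CantorSpace

lemma continuous_of_locdet (h : CantorSpace → CantorSpace)
    (H : ∀ k, ∃ N, ∀ x y : CantorSpace, (∀ i, i < N → x i = y i) → h x k = h y k) :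
    Continuous h := by
  refine continuous_pi fun k => ?_
  obtain ⟨N, hN⟩ := H k
  rw [continuous_iff_continuousAt]
  intro x
  have hmem : {y : CantorSpace | ∀ i, i < N → y i = x i} ∈ 𝓝 x := by
    have heq : {y : CantorSpace | ∀ i, i < N → y i = x i}
        = ⋂ i : Fin N, (fun y : CantorSpace => y i.1) ⁻¹' {x i.1} := by
      ext y
      simp only [Set.mem_setOf_eq, Set.mem_iInter, Set.mem_preimage, Set.mem_singleton_iff]
      exact ⟨fun hy i => hy i.1 i.2, fun hy i hi => hy ⟨i, hi⟩⟩
    rw [heq]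
    exact (isOpen_iInter_of_finite fun i =>
      (isOpen_discrete _).preimage (continuous_apply _)).mem_nhds (by simp)
  have hev : ∀ᶠ y in 𝓝 x, h y k = h x k := by
    filter_upwards [hmem] with y hy using hN y x hy
  exact Filter.Tendsto.congr' (Filter.EventuallyEq.symm hev) tendsto_const_nhds


open scoped Classical

noncomputable def swapFun (w : ℕ → Bool) (L : ℕ) : CantorSpace → CantorSpace := fun x =>
  if x 0 = true then (fun i => if i < L then w i else x (i - L + 1))
  else if ∀ i, i < L → x i = w i then (fun i => if i = 0 then true else x (i + L - 1))
  else x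

variable {w : ℕ → Bool} {L : ℕ}

lemma swapFun_invol (hw : w 0 = false) (hL : 1 ≤ L) (x : CantorSpace) :
    swapFun w L (swapFun w L x) = x := by
  by_cases h1 : x 0 = true
  · have hy : swapFun w L x = fun i => if i < L then w i else x (i - L + 1) := by
      rw [swapFun, if_pos h1]
    rw [hy]
    have hz : (0:ℕ) < L := hL
    have hy0 : ¬ ((fun i => if i < L then w i else x (i - L + 1)) 0 = true) := by
      simp only [if_pos hz, hw]; simp
    have hy2 : ∀ i, i < L → (fun i => if i < L then w i else x (i - L + 1)) i = w i := by
      intro i hi; simp only [if_pos hi]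
    rw [swapFun, if_neg hy0, if_pos hy2]
    funext i
    rcases Nat.eq_zero_or_pos i with rfl | hi
    · simpa using h1.symm
    · have h2 : ¬ (i + L - 1 < L) := by omega
      have h3 : ¬ (i = 0) := by omega
      simp only [if_neg h3, if_neg h2]
      congr 1
      omega
  · by_cases h2 : ∀ i, i < L → x i = w i
    · have hy : swapFun w L x = fun i => if i = 0 then true else x (i + L - 1) := by
        rw [swapFun, if_neg h1, if_pos h2]
      rw [hy]
      have hy0 : (fun i => if i = 0 then true else x (i + L - 1)) 0 = true := by simp
      rw [swapFun, if_pos hy0]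
      funext i
      by_cases hi : i < L
      · simp only [if_pos hi]
        exact (h2 i hi).symm
      · have h3 : ¬ (i - L + 1 = 0) := by omega
        simp only [if_neg hi, if_neg h3]
        congr 1
        omega
    · have hy : swapFun w L x = x := by rw [swapFun, if_neg h1, if_neg h2]
      rw [hy, swapFun, if_neg h1, if_neg h2]

lemma swapFun_locdet (w : ℕ → Bool) (L : ℕ) (k : ℕ) :
    ∀ x y : CantorSpace, (∀ i, i < L + k + 2 → x i = y i) → swapFun w L x k = swapFun w L y k := by
  intro x y h
  have e0 : x 0 = y 0 := h 0 (by omega)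
  have eL : (∀ i, i < L → x i = w i) ↔ (∀ i, i < L → y i = w i) := by
    constructor <;> intro hh i hi
    · rw [← h i (by omega)]; exact hh i hi
    · rw [h i (by omega)]; exact hh i hi
  rw [swapFun, swapFun, ← e0]
  by_cases h1 : x 0 = true
  · simp only [if_pos h1]
    by_cases hk : k < L
    · simp only [if_pos hk]
    · simp only [if_neg hk]; exact h _ (by omega)
  · simp only [if_neg h1]
    by_cases h2 : ∀ i, i < L → x i = w i
    · simp only [if_pos h2, if_pos (eL.mp h2)]
      by_cases hk : k = 0
      · simp only [if_pos hk]
      · simp only [if_neg hk]; exact h _ (by omega)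
    · simp only [if_neg h2, if_neg (fun hh => h2 (eL.mpr hh))]
      exact h k (by omega)

noncomputable def flipFun (m : ℕ) : CantorSpace → CantorSpace := fun x =>
  if ∀ i, i < m → x i = false then (fun i => if i = m then !(x m) else x i) else x

lemma flipFun_invol (m : ℕ) (x : CantorSpace) : flipFun m (flipFun m x) = x := by
  by_cases h1 : ∀ i, i < m → x i = false
  · have hy : flipFun m x = fun i => if i = m then !(x m) else x i := by
      rw [flipFun, if_pos h1]
    rw [hy]
    have h2 : ∀ i, i < m → (fun i => if i = m then !(x m) else x i) i = false := by
      intro i hi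
      have : ¬ (i = m) := by omega
      simp only [if_neg this]
      exact h1 i hi
    rw [flipFun, if_pos h2]
    funext i
    by_cases hi : i = m
    · subst hi; simp
    · simp [hi]
  · have hy : flipFun m x = x := by rw [flipFun, if_neg h1]
    rw [hy, flipFun, if_neg h1]

lemma flipFun_locdet (m : ℕ) (k : ℕ) :
    ∀ x y : CantorSpace, (∀ i, i < m + k + 1 → x i = y i) → flipFun m x k = flipFun m y k := by
  intro x y h
  have eL : (∀ i, i < m → x i = false) ↔ (∀ i, i < m → y i = false) := by
    constructor <;> intro hh i hi
    · rw [← h i (by omega)]; exact hh i hi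
    · rw [h i (by omega)]; exact hh i hi
  rw [flipFun, flipFun]
  by_cases h1 : ∀ i, i < m → x i = false
  · simp only [if_pos h1, if_pos (eL.mp h1)]
    by_cases hk : k = m
    · simp only [if_pos hk, h m (by omega)]
    · simp only [if_neg hk]; exact h k (by omega)
  · simp only [if_neg h1, if_neg (fun hh => h1 (eL.mpr hh))]
    exact h k (by omega)

/-- The homeomorphism swapping the cylinders `[true]` and `[w₀…w_{L-1}]`. -/
noncomputable def swapH (w : ℕ → Bool) (L : ℕ) (hw : w 0 = false) (hL : 1 ≤ L) : HC :=
  Homeomorph.mk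
    ⟨swapFun w L, swapFun w L, swapFun_invol hw hL, swapFun_invol hw hL⟩
    (continuous_of_locdet _ fun k => ⟨L + k + 2, swapFun_locdet w L k⟩)
    (continuous_of_locdet _ fun k => ⟨L + k + 2, swapFun_locdet w L k⟩)

@[simp] lemma swapH_apply (w : ℕ → Bool) (L : ℕ) (hw : w 0 = false) (hL : 1 ≤ L)
    (x : CantorSpace) : swapH w L hw hL x = swapFun w L x := rfl

/-- The homeomorphism flipping coordinate `m` on the cylinder `[0^m]`. -/
noncomputable def flipH (m : ℕ) : HC :=
  Homeomorph.mk
    ⟨flipFun m, flipFun m, flipFun_invol m, flipFun_invol m⟩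
    (continuous_of_locdet _ fun k => ⟨m + k + 1, flipFun_locdet m k⟩)
    (continuous_of_locdet _ fun k => ⟨m + k + 1, flipFun_locdet m k⟩)

@[simp] lemma flipH_apply (m : ℕ) (x : CantorSpace) : flipH m x = flipFun m x := rfl

lemma mul_apply (a b : HC) (x : CantorSpace) : (a * b) x = a (b x) := rfl

lemma one_apply (x : CantorSpace) : (1 : HC) x = x := rfl

lemma coe_cm_apply (h : HC) (x : CantorSpace) : (h : C(CantorSpace, CantorSpace)) x = h x := rfl

/-- The basic neighborhoods of the identity. -/
def Vset (m : ℕ) : Set HC := {h : HC | ∀ x : CantorSpace, ∀ i, i < m → h x i = x i}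

lemma Vset_anti {m m' : ℕ} (h : m ≤ m') : Vset m' ⊆ Vset m :=
  fun g hg x i hi => hg x i (lt_of_lt_of_le hi h)

lemma isOpen_cylinder (c : CantorSpace) (N : ℕ) :
    IsOpen {z : CantorSpace | ∀ i, i < N → z i = c i} := by
  have heq : {z : CantorSpace | ∀ i, i < N → z i = c i}
      = ⋂ i : Fin N, (fun z : CantorSpace => z i.1) ⁻¹' {c i.1} := by
    ext z
    simp only [Set.mem_setOf_eq, Set.mem_iInter, Set.mem_preimage, Set.mem_singleton_iff]
    exact ⟨fun hz i => hz i.1 i.2, fun hz i hi => hz ⟨i, hi⟩⟩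
  rw [heq]
  exact isOpen_iInter_of_finite fun i => (isOpen_discrete _).preimage (continuous_apply _)

lemma Vset_mem_nhds (m : ℕ) : Vset m ∈ 𝓝 (1 : HC) := by
  have hopen : IsOpen {φ : C(CantorSpace, CantorSpace) | ∀ x : CantorSpace, ∀ i, i < m →
      φ x i = x i} := by
    have heq : {φ : C(CantorSpace, CantorSpace) | ∀ x : CantorSpace, ∀ i, i < m → φ x i = x i}
        = ⋂ i : Fin m, ⋂ b : Bool,
            {φ : C(CantorSpace, CantorSpace) | MapsTo φ {x | x i.1 = b} {x | x i.1 = b}} := by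
      ext φ
      simp only [Set.mem_setOf_eq, Set.mem_iInter, MapsTo, Set.mem_setOf_eq]
      constructor
      · intro hφ i b x hx
        rw [hφ x i.1 i.2, hx]
      · intro hφ x i hi
        exact hφ ⟨i, hi⟩ (x i) rfl
    rw [heq]
    refine isOpen_iInter_of_finite fun i => isOpen_iInter_of_finite fun b => ?_
    refine ContinuousMap.isOpen_setOf_mapsTo ?_ ?_
    · show IsCompact ((fun z : CantorSpace => z i.1) ⁻¹' {b})
      exact IsClosed.isCompact
        (IsClosed.preimage (continuous_apply i.1) (isClosed_discrete ({b} : Set Bool)))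
    · show IsOpen ((fun z : CantorSpace => z i.1) ⁻¹' {b})
      exact IsOpen.preimage (continuous_apply i.1) (isOpen_discrete ({b} : Set Bool))
  have hV : IsOpen (Vset m) := by
    have := isOpen_induced (f := fun h : HC => (h : C(CantorSpace, CantorSpace))) hopen
    exact this
  exact hV.mem_nhds (fun x i _ => rfl)

lemma lebesgue {K Uo : Set CantorSpace} (hK : IsCompact K) (hUo : IsOpen Uo)
    {φ₀ : C(CantorSpace, CantorSpace)} (h₀ : MapsTo φ₀ K Uo) :
    ∃ m, ∀ φ : C(CantorSpace, CantorSpace),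
      (∀ x : CantorSpace, ∀ i, i < m → φ x i = φ₀ x i) → MapsTo φ K Uo := by
  have h1 : ∀ x ∈ K, ∃ n : ℕ, ∀ z : CantorSpace, (∀ i, i < n → z i = φ₀ x i) → z ∈ Uo := by
    intro x hx
    obtain ⟨I, u, hIu, hsub⟩ := isOpen_pi_iff.1 hUo (φ₀ x) (h₀ hx)
    refine ⟨(I.sup id) + 1, fun z hz => hsub fun i hi => ?_⟩
    rw [hz i (by
      have : i ≤ I.sup id := Finset.le_sup (f := id) hi
      omega)]
    exact (hIu i hi).2
  choose! n hn using h1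
  have hcov : K ⊆ ⋃ x ∈ K, (φ₀ ⁻¹' {z : CantorSpace | ∀ i, i < n x → z i = φ₀ x i}) := by
    intro x hx
    exact Set.mem_biUnion hx (fun i _ => rfl)
  obtain ⟨b', hb'K, hb'fin, hb'cov⟩ := hK.elim_finite_subcover_image
    (fun x _ => (isOpen_cylinder (φ₀ x) (n x)).preimage φ₀.continuous) hcov
  refine ⟨hb'fin.toFinset.sup n, fun φ hφ y hy => ?_⟩
  obtain ⟨x, hxb', hyW⟩ := Set.mem_iUnion₂.1 (hb'cov hy)
  refine hn x (hb'K hxb') (φ y) fun i hi => ?_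
  rw [hφ y i (lt_of_lt_of_le hi (Finset.le_sup (hb'fin.mem_toFinset.2 hxb')))]
  exact hyW i hi

lemma key_open {O : Set C(CantorSpace, CantorSpace)}
    (hO : TopologicalSpace.GenerateOpen
      (Set.image2 (fun K U => {f : C(CantorSpace, CantorSpace) | MapsTo f K U})
        {K : Set CantorSpace | IsCompact K} {U : Set CantorSpace | IsOpen U}) O) :
    ∀ φ₀ ∈ O, ∃ m, ∀ φ : C(CantorSpace, CantorSpace),
      (∀ x : CantorSpace, ∀ i, i < m → φ x i = φ₀ x i) → φ ∈ O := by
  induction hO with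
  | basic s hs =>
    intro φ₀ h₀
    obtain ⟨K, hK, Uo, hUo, rfl⟩ := hs
    exact lebesgue hK hUo h₀
  | univ => exact fun φ₀ _ => ⟨0, fun _ _ => Set.mem_univ _⟩
  | inter s t hs ht IHs IHt =>
    intro φ₀ h₀
    obtain ⟨m1, h1⟩ := IHs φ₀ h₀.1
    obtain ⟨m2, h2⟩ := IHt φ₀ h₀.2
    exact ⟨max m1 m2, fun φ hφ =>
      ⟨h1 φ (fun x i hi => hφ x i (lt_of_lt_of_le hi (le_max_left _ _))),
       h2 φ (fun x i hi => hφ x i (lt_of_lt_of_le hi (le_max_right _ _)))⟩⟩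
  | sUnion S hS IH =>
    rintro φ₀ ⟨s, hsS, h₀⟩
    obtain ⟨m, hm⟩ := IH s hsS φ₀ h₀
    exact ⟨m, fun φ hφ => ⟨s, hsS, hm φ hφ⟩⟩

lemma exists_Vset_subset {U : Set HC} (hU : U ∈ 𝓝 (1 : HC)) : ∃ m, 1 ≤ m ∧ Vset m ⊆ U := by
  have hind : (𝓝 (1 : HC)) = Filter.comap (fun h : HC => (h : C(CantorSpace, CantorSpace)))
      (𝓝 (((1 : HC) : C(CantorSpace, CantorSpace)))) := nhds_induced _ _
  rw [hind, Filter.mem_comap] at hU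
  obtain ⟨T, hT, hTU⟩ := hU
  obtain ⟨O, hOT, hO, hid⟩ := mem_nhds_iff.1 hT
  have hO' : TopologicalSpace.GenerateOpen
      (Set.image2 (fun K U => {f : C(CantorSpace, CantorSpace) | MapsTo f K U})
        {K : Set CantorSpace | IsCompact K} {U : Set CantorSpace | IsOpen U}) O := hO
  obtain ⟨m, hm⟩ := key_open hO' _ hid
  refine ⟨m + 1, by omega, fun h hh => ?_⟩
  refine hTU (hOT (hm _ fun x i hi => ?_))
  exact hh x i (by omega)

lemma swapFun_b1 (w : ℕ → Bool) (L : ℕ) (x : CantorSpace) (h : x 0 = true) :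
    swapFun w L x = fun i => if i < L then w i else x (i - L + 1) := by
  rw [swapFun, if_pos h]

lemma swapFun_b2 (w : ℕ → Bool) (L : ℕ) (x : CantorSpace) (h0 : ¬ x 0 = true)
    (h : ∀ i, i < L → x i = w i) :
    swapFun w L x = fun i => if i = 0 then true else x (i + L - 1) := by
  rw [swapFun, if_neg h0, if_pos h]

lemma swapFun_b3 (w : ℕ → Bool) (L : ℕ) (x : CantorSpace) (h0 : ¬ x 0 = true)
    (h : ¬ ∀ i, i < L → x i = w i) : swapFun w L x = x := by
  rw [swapFun, if_neg h0, if_neg h]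

lemma flipFun_pos (m : ℕ) (x : CantorSpace) (h : ∀ i, i < m → x i = false) :
    flipFun m x = fun i => if i = m then !(x m) else x i := by
  rw [flipFun, if_pos h]

/-- the word `0^m 1` -/
def wm (m : ℕ) : ℕ → Bool := fun i => if i = m then true else false

lemma val1_fun (m L : ℕ) (hm : 1 ≤ m) (hmL : m < L) :
    swapFun (wm m) (m + 1) (flipFun m (swapFun (fun _ => false) L (fun _ => true))) 0 = true := by
  rw [swapFun_b1 (fun _ => false) L (fun _ => true) rfl]
  rw [flipFun_pos m _ (by intro i hi; simp only [if_pos (show i < L by omega)])]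
  rw [swapFun_b2 _ _ _ ?h0 ?h2]
  case h0 =>
    simp only [if_neg (show ¬ (0 : ℕ) = m by omega), if_pos (show 0 < L by omega)]
    simp
  case h2 =>
    intro i hi
    by_cases him : i = m
    · simp only [him, if_pos rfl, if_pos (show m < L by omega), wm]
      simp
    · simp only [if_neg him, if_pos (show i < L by omega), wm]
  simp

lemma val0_fun (m L : ℕ) (hm : 1 ≤ m) (hmL : m < L) (x : CantorSpace) (hx : x 0 = true) :
    swapFun (wm m) (m + 1) (swapFun (fun _ => false) L x) 0 = false := by
  rw [swapFun_b1 (fun _ => false) L x hx]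
  rw [swapFun_b3 _ _ _ ?h0 ?h2]
  case h0 =>
    simp only [if_pos (show 0 < L by omega)]
    simp
  case h2 =>
    intro hall
    have := hall m (by omega)
    simp only [if_pos (show m < L by omega), wm, if_pos rfl] at this
    exact absurd this (by simp)
  simp only [if_pos (show 0 < L by omega)]

lemma flipH_mem_Vset (m : ℕ) : flipH m ∈ Vset m := by
  intro x i hi
  rw [flipH_apply, flipFun]
  by_cases h : ∀ j, j < m → x j = false
  · rw [if_pos h]
    simp only [if_neg (show ¬ i = m by omega)]
  · rw [if_neg h]

noncomputable def gseq (n : ℕ) : HC := swapH (fun _ => false) (n + 1) rfl (by omega)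

noncomputable def gmH (m : ℕ) (hm : 1 ≤ m) : HC :=
  swapH (wm m) (m + 1) (by simp only [wm, if_neg (show ¬ (0 : ℕ) = m by omega)]) (by omega)

/-- the function `f`: does `g` map some point of the cylinder `[1]` into `[1]`? -/
noncomputable def myf (g : HC) : ℝ :=
  if ∃ x : CantorSpace, x 0 = true ∧ (g x) 0 = true then 1 else 0

lemma myf_eq_of_V1 (u : HC) (hu : u ∈ Vset 1) (g : HC) :
    myf (u * g) = myf g ∧ myf (g * u) = myf g := by
  constructor
  · have hiff : (∃ x : CantorSpace, x 0 = true ∧ ((u * g) x) 0 = true)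
        ↔ (∃ x : CantorSpace, x 0 = true ∧ (g x) 0 = true) := by
      constructor
      · rintro ⟨x, hx, hx2⟩
        refine ⟨x, hx, ?_⟩
        rw [mul_apply] at hx2
        rw [← hu (g x) 0 (by omega)]
        exact hx2
      · rintro ⟨x, hx, hx2⟩
        refine ⟨x, hx, ?_⟩
        rw [mul_apply, hu (g x) 0 (by omega)]
        exact hx2
    rw [myf, myf, if_congr hiff rfl rfl]
  · have hiff : (∃ x : CantorSpace, x 0 = true ∧ ((g * u) x) 0 = true)
        ↔ (∃ x : CantorSpace, x 0 = true ∧ (g x) 0 = true) := by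
      constructor
      · rintro ⟨x, hx, hx2⟩
        refine ⟨u x, ?_, ?_⟩
        · rw [hu x 0 (by omega)]; exact hx
        · rw [mul_apply] at hx2; exact hx2
      · rintro ⟨x, hx, hx2⟩
        refine ⟨u.symm x, ?_, ?_⟩
        · have h5 := hu (u.symm x) 0 (by omega)
          rw [u.apply_symm_apply] at h5
          rw [← h5]; exact hx
        · rw [mul_apply, u.apply_symm_apply]; exact hx2
    rw [myf, myf, if_congr hiff rfl rfl]

lemma myf_val1 (m n : ℕ) (hm : 1 ≤ m) (hmn : m < n + 1) :
    myf ((gmH m hm * flipH m) * gseq n) = 1 := by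
  rw [myf, if_pos]
  exact ⟨fun _ => true, rfl, val1_fun m (n + 1) hm hmn⟩

lemma myf_val0 (m n : ℕ) (hm : 1 ≤ m) (hmn : m < n + 1) :
    myf (gmH m hm * gseq n) = 0 := by
  rw [myf, if_neg]
  rintro ⟨x, hx, hx2⟩
  have hx2' : swapFun (wm m) (m + 1) (swapFun (fun _ => false) (n + 1) x) 0 = true := hx2
  rw [val0_fun m (n + 1) hm hmn x hx] at hx2'
  exact absurd hx2' (by simp)

end Aux

variable (G : Type) [Group G] [TopologicalSpace G]

/-- `f : G → ℝ` is an SUC function: it comes from a compact SUC `G`-flow. -/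
def IsSUCFunction (f : G → ℝ) : Prop :=
  ∃ (X : Type) (_ : UniformSpace X) (_ : CompactSpace X) (_ : T2Space X)
    (_ : MulAction G X) (_ : ContinuousSMul G X),
    IsSUCFlow G X ∧ ∃ (x₀ : X) (F : X → ℝ), Continuous F ∧ ∀ g : G, f g = F (g • x₀)

/-- `f` is right uniformly continuous. -/
def RightUC (f : G → ℝ) : Prop :=
  ∀ ε : ℝ, 0 < ε → ∃ U ∈ nhds (1 : G), ∀ u ∈ U, ∀ g : G, |f (u * g) - f g| < ε

/-- `f` is left uniformly continuous. -/
def LeftUC (f : G → ℝ) : Prop :=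
  ∀ ε : ℝ, 0 < ε → ∃ U ∈ nhds (1 : G), ∀ u ∈ U, ∀ g : G, |f (g * u) - f g| < ε

/-- On the homeomorphism group `G = H(C)` of the Cantor space there is a
bounded function which is both left and right uniformly continuous but not an SUC
function; in particular `SUC(G) ⊊ UC(G)`. -/
theorem statement18 :
    ∃ f : (CantorSpace ≃ₜ CantorSpace) → ℝ,
      (∃ M : ℝ, ∀ g : CantorSpace ≃ₜ CantorSpace, |f g| ≤ M) ∧
      LeftUC (CantorSpace ≃ₜ CantorSpace) f ∧
      RightUC (CantorSpace ≃ₜ CantorSpace) f ∧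
      ¬ IsSUCFunction (CantorSpace ≃ₜ CantorSpace) f := by
  refine ⟨Aux.myf, ⟨1, fun g => ?_⟩, ?_, ?_, ?_⟩
  · rw [Aux.myf]
    split_ifs <;> simp
  · intro ε hε
    refine ⟨Aux.Vset 1, Aux.Vset_mem_nhds 1, fun u hu g => ?_⟩
    rw [(Aux.myf_eq_of_V1 u hu g).2, sub_self, abs_zero]
    exact hε
  · intro ε hε
    refine ⟨Aux.Vset 1, Aux.Vset_mem_nhds 1, fun u hu g => ?_⟩
    rw [(Aux.myf_eq_of_V1 u hu g).1, sub_self, abs_zero]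
    exact hε
  · rintro ⟨X, uX, cX, t2X, mX, csX, hflow, x₀, F, hFc, hfF⟩
    letI := uX
    haveI := cX
    haveI := t2X
    letI := mX
    haveI := csX
    have hFu : UniformContinuous F := CompactSpace.uniformContinuous_of_continuous hFc
    have hδ : (fun p : X × X => (F p.1, F p.2)) ⁻¹' {q : ℝ × ℝ | dist q.1 q.2 < 1/3} ∈ 𝓤 X :=
      hFu (Metric.dist_mem_uniformity (by norm_num))
    obtain ⟨y, hy⟩ := exists_clusterPt_of_compactSpace
      (Filter.map (fun n => Aux.gseq n • x₀) Filter.atTop)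
    obtain ⟨U, hU, hP⟩ := hflow y _ hδ
    obtain ⟨m, hm1, hmV⟩ := Aux.exists_Vset_subset hU
    set u : Aux.HC := Aux.flipH m with hu_def
    have hu : u ∈ U := hmV (Aux.flipH_mem_Vset m)
    set gm : Aux.HC := Aux.gmH m hm1 with hgm_def
    have h3 : dist (F ((gm * u) • y)) (F (gm • y)) < 1/3 := by
      have hP' := hP gm u hu
      rw [Set.mem_preimage, Set.mem_setOf_eq] at hP'
      rw [mul_smul]
      exact hP'
    have hO : {x : X | dist (F ((gm * u) • x)) (F ((gm * u) • y)) < 1/3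
        ∧ dist (F (gm • x)) (F (gm • y)) < 1/3} ∈ 𝓝 y := by
      refine IsOpen.mem_nhds (IsOpen.inter ?_ ?_) (by simp)
      · exact isOpen_lt ((hFc.comp (continuous_const_smul _)).dist continuous_const)
          continuous_const
      · exact isOpen_lt ((hFc.comp (continuous_const_smul _)).dist continuous_const)
          continuous_const
    have hfreq : ∃ᶠ n in Filter.atTop, (Aux.gseq n • x₀) ∈
        {x : X | dist (F ((gm * u) • x)) (F ((gm * u) • y)) < 1/3
          ∧ dist (F (gm • x)) (F (gm • y)) < 1/3} :=
      (mapClusterPt_iff_frequently.mp hy) _ hO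
    obtain ⟨n, hnO, hnm⟩ := (hfreq.and_eventually (Filter.eventually_ge_atTop m)).exists
    obtain ⟨hc1, hc2⟩ := hnO
    have hv1 : F (((gm * u) * Aux.gseq n) • x₀) = 1 := by
      rw [← hfF]; exact Aux.myf_val1 m n hm1 (by omega)
    have hv0 : F ((gm * Aux.gseq n) • x₀) = 0 := by
      rw [← hfF]; exact Aux.myf_val0 m n hm1 (by omega)
    rw [mul_smul] at hv1 hv0
    have tri := dist_triangle4 (F ((gm * u) • (Aux.gseq n • x₀))) (F ((gm * u) • y))
      (F (gm • y)) (F (gm • (Aux.gseq n • x₀)))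
    rw [hv1] at tri hc1
    rw [hv0] at tri hc2
    have hone : dist (1 : ℝ) 0 = 1 := by simp [Real.dist_eq]
    have hc2' : dist (F (gm • y)) (0 : ℝ) < 1/3 := by rw [dist_comm]; exact hc2
    rw [hone] at tri
    linarith
end

section
/- The group G = H(C) of homeomorphisms of the Cantor space has the SUC fixed point property: every nonempty compact SUC G-flow X contains a point x with g•x = x for all g ∈ G. -/
open Filter Topology

namespace Statement19Aux

open Set

abbrev Cs : Type := CantorSpace
abbrev HC : Type := CantorSpace ≃ₜ CantorSpace

lemma one_apply (x : Cs) : (1 : HC) x = x := rfl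
lemma mul_apply (a b : HC) (x : Cs) : (a * b) x = a (b x) := rfl
lemma inv_apply (a : HC) (x : Cs) : (a⁻¹ : HC) x = a.symm x := rfl

def Agree (n : ℕ) (x y : Cs) : Prop := ∀ k, k < n → x k = y k

lemma Agree.mono {m n : ℕ} {x y : Cs} (h : Agree n x y) (hm : m ≤ n) : Agree m x y :=
  fun k hk => h k (lt_of_lt_of_le hk hm)

lemma Agree.symm {n : ℕ} {x y : Cs} (h : Agree n x y) : Agree n y x :=
  fun k hk => (h k hk).symm

lemma Agree.trans {n : ℕ} {x y z : Cs} (h1 : Agree n x y) (h2 : Agree n y z) : Agree n x z :=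
  fun k hk => (h1 k hk).trans (h2 k hk)

def Ball (x : Cs) (n : ℕ) : Set Cs := {y | Agree n y x}

lemma mem_ball_self (x : Cs) (n : ℕ) : x ∈ Ball x n := fun _ _ => rfl

lemma isOpen_ball (x : Cs) (n : ℕ) : IsOpen (Ball x n) := by
  have h : Ball x n = ⋂ k ∈ Finset.range n, (fun y : Cs => y k) ⁻¹' {x k} := by
    ext y
    simp only [Ball, Agree, mem_setOf_eq, mem_iInter, mem_preimage, mem_singleton_iff,
      Finset.mem_range]
  rw [h]
  exact isOpen_biInter_finset fun k _ => (continuous_apply k).isOpen_preimage _ (isOpen_discrete _)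

lemma exists_ball_subset {O : Set Cs} (hO : IsOpen O) {x : Cs} (hx : x ∈ O) :
    ∃ n, Ball x n ⊆ O := by
  rw [isOpen_pi_iff] at hO
  obtain ⟨I, u, hu, hsub⟩ := hO x hx
  refine ⟨I.sup id + 1, fun y hy => hsub ?_⟩
  intro a ha
  have hay : y a = x a := hy a (Nat.lt_succ_of_le (Finset.le_sup (f := id) ha))
  rw [hay]
  exact (hu a ha).2

lemma exists_modulus (f : Cs → Cs) (hf : Continuous f) (M : ℕ) :
    ∃ L, M ≤ L ∧ ∀ x y, Agree L x y → Agree M (f x) (f y) := by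
  have hball : ∀ x : Cs, ∃ n, Ball x n ⊆ f ⁻¹' Ball (f x) M := fun x =>
    exists_ball_subset ((isOpen_ball (f x) M).preimage hf) (mem_ball_self (f x) M)
  choose n hn using hball
  obtain ⟨T, hT⟩ := IsCompact.elim_finite_subcover isCompact_univ (fun x : Cs => Ball x (n x))
    (fun x => isOpen_ball x (n x)) (fun x _ => mem_iUnion.2 ⟨x, mem_ball_self x (n x)⟩)
  refine ⟨M + T.sup n, Nat.le_add_right _ _, fun x y hxy => ?_⟩
  have hx : x ∈ ⋃ t ∈ T, Ball t (n t) := hT (mem_univ x)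
  simp only [mem_iUnion] at hx
  obtain ⟨t, ht, hxt⟩ := hx
  have hnt : n t ≤ M + T.sup n := le_trans (Finset.le_sup ht) (Nat.le_add_left _ _)
  have hyt : y ∈ Ball t (n t) := (hxy.symm.mono hnt).trans hxt
  have h1 : Agree M (f x) (f t) := hn t hxt
  have h2 : Agree M (f y) (f t) := hn t hyt
  exact h1.trans h2.symm

lemma exists_depth_CM (f : C(Cs, Cs)) {W : Set C(Cs, Cs)} (hW : W ∈ 𝓝 f) :
    ∃ M, ∀ h : C(Cs, Cs), (∀ x, Agree M (h x) (f x)) → h ∈ W := by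
  classical
  set S : ℕ → Set C(Cs, Cs) := fun M => {h | ∀ x, Agree M (h x) (f x)} with hS
  have hdir : Directed (· ≥ ·) fun M => (𝓟 (S M) : Filter C(Cs, Cs)) := by
    intro a b
    refine ⟨max a b, principal_mono.2 fun h hh x => (hh x).mono (le_max_left a b),
      principal_mono.2 fun h hh x => (hh x).mono (le_max_right a b)⟩
  have hle : (⨅ M, (𝓟 (S M) : Filter C(Cs, Cs))) ≤ 𝓝 f := by
    have : Tendsto (fun h : C(Cs, Cs) => h) (⨅ M, (𝓟 (S M) : Filter C(Cs, Cs))) (𝓝 f) := by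
      rw [ContinuousMap.tendsto_nhds_compactOpen]
      intro K hK U hU hfKU
      have hball : ∀ x : K, ∃ n, Ball (f x.1) n ⊆ U := fun x =>
        exists_ball_subset hU (hfKU x.2)
      choose m hm using hball
      by_cases hKne : Nonempty K
      · obtain ⟨T, hT⟩ := IsCompact.elim_finite_subcover hK
          (fun i : K => f ⁻¹' Ball (f i.1) (m i))
          (fun i => (isOpen_ball _ _).preimage f.continuous)
          (fun x hx => mem_iUnion.2 ⟨⟨x, hx⟩, mem_ball_self _ _⟩)
        have : S (T.sup m) ∈ (⨅ M, (𝓟 (S M) : Filter C(Cs, Cs))) := by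
          rw [Filter.mem_iInf_of_directed hdir]
          exact ⟨T.sup m, mem_principal_self _⟩
        refine Filter.mem_of_superset this ?_
        intro h hh x hx
        have := hT hx
        simp only [mem_iUnion] at this
        obtain ⟨i, hi, hxi⟩ := this
        have h1 : Agree (m i) (f x) (f i.1) := hxi
        have h2 : Agree (m i) (h x) (f x) := (hh x).mono (Finset.le_sup hi)
        exact hm i (h2.trans h1)
      · have hKe : K = ∅ := by
          rw [Set.not_nonempty_iff_eq_empty'] at hKne; exact hKne
        subst hKe
        filter_upwards with h
        exact fun x hx => absurd hx (Set.notMem_empty x)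
    intro W' hW'
    exact this hW'
  have hWm : W ∈ ⨅ M, (𝓟 (S M) : Filter C(Cs, Cs)) := hle hW
  rw [Filter.mem_iInf_of_directed hdir] at hWm
  obtain ⟨M, hM⟩ := hWm
  rw [mem_principal] at hM
  exact ⟨M, fun h hh => hM hh⟩

lemma exists_depth_G (f : HC) {W : Set HC} (hW : W ∈ 𝓝 f) :
    ∃ M, ∀ h : HC, (∀ x, Agree M (h x) (f x)) → h ∈ W := by
  have hnh : (𝓝 f : Filter HC) =
      Filter.comap (fun h : HC => (h : C(Cs, Cs))) (𝓝 ((f : C(Cs, Cs)))) :=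
    nhds_induced _ f
  rw [hnh, Filter.mem_comap] at hW
  obtain ⟨W', hW', hsub⟩ := hW
  obtain ⟨M, hM⟩ := exists_depth_CM _ hW'
  exact ⟨M, fun h hh => hsub (hM _ (fun x => hh x))⟩

lemma cont_aux {X ι Y : Type*} [TopologicalSpace X] [TopologicalSpace ι] [DiscreteTopology ι]
    [TopologicalSpace Y] {e : X → ι} (he : Continuous e) {F : ι → X → Y}
    (hF : ∀ i, Continuous (F i)) : Continuous fun x => F (e x) x := by
  rw [continuous_iff_continuousAt]
  intro x
  have hev : ∀ᶠ x' in 𝓝 x, e x' = e x := by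
    have : {i : ι | i = e x} ∈ 𝓝 (e x) := by
      simp only [isOpen_discrete {i : ι | i = e x} |>.mem_nhds_iff]
      rfl
    exact he.continuousAt this
  exact ((hF (e x)).continuousAt).congr (hev.mono fun x' hx' => congrFun (congrArg F hx'.symm) x')


noncomputable section Constr

variable (g : HC) (M L N J : ℕ)

def embedL (w : Fin L → Bool) : Cs := fun k => if h : k < L then w ⟨k, h⟩ else false

def truncF (n : ℕ) (x : Cs) : Fin n → Bool := fun i => x i.1

lemma agree_embedL (x : Cs) : Agree L (embedL L (truncF L x)) x := by
  intro k hk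
  simp only [embedL, truncF, dif_pos hk]

def mg (w : Fin L → Bool) : Fin M → Bool := truncF M (g (embedL L w))

lemma mg_spec (x : Cs) (hmod : ∀ x y, Agree L x y → Agree M (g x) (g y)) (i : Fin M) :
    mg g M L (truncF L x) i = g x i.1 := by
  have := hmod _ _ (agree_embedL L x)
  exact this i.1 i.2

def Av (v : Fin M → Bool) : Finset (Fin L → Bool) :=
  Finset.univ.filter fun w => mg g M L w = v

def qv (v : Fin M → Bool) : ℕ := (Av g M L v).card

lemma mem_Av_self (w : Fin L → Bool) : w ∈ Av g M L (mg g M L w) :=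
  Finset.mem_filter.2 ⟨Finset.mem_univ _, rfl⟩

lemma qv_pos (hmod : ∀ x y, Agree L x y → Agree M (g x) (g y)) (v : Fin M → Bool) :
    0 < qv g M L v := by
  have hx : mg g M L (truncF L (g.symm (embedL M v))) = v := by
    funext i
    have h1 : g (g.symm (embedL M v)) = embedL M v := g.apply_symm_apply _
    have h2 := mg_spec g M L (g.symm (embedL M v)) hmod i
    rw [h2, h1]
    simp only [embedL, dif_pos i.2]
  exact Finset.card_pos.2 ⟨truncF L (g.symm (embedL M v)),
    Finset.mem_filter.2 ⟨Finset.mem_univ _, hx⟩⟩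

lemma qv_le (v : Fin M → Bool) : qv g M L v ≤ 2 ^ L := by
  have h1 : qv g M L v ≤ Fintype.card (Fin L → Bool) := Finset.card_le_univ _
  rwa [Fintype.card_fun, Fintype.card_bool, Fintype.card_fin] at h1

def jjv (v : Fin M → Bool) (w : Fin L → Bool) (h : w ∈ Av g M L v) : ℕ :=
  ((Av g M L v).equivFin ⟨w, h⟩).1

lemma jjv_lt {v : Fin M → Bool} {w : Fin L → Bool} (h : w ∈ Av g M L v) :
    jjv g M L v w h < qv g M L v := ((Av g M L v).equivFin ⟨w, h⟩).2

lemma jjv_congr {v v' : Fin M → Bool} {w : Fin L → Bool} (hv : v = v')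
    (h : w ∈ Av g M L v) (h' : w ∈ Av g M L v') :
    jjv g M L v w h = jjv g M L v' w h' := by subst hv; rfl

def jjw (w : Fin L → Bool) : ℕ := jjv g M L (mg g M L w) w (mem_Av_self g M L w)

lemma jjw_lt (w : Fin L → Bool) : jjw g M L w < qv g M L (mg g M L w) := jjv_lt g M L _

def blen (w : Fin L → Bool) : ℕ :=
  if jjw g M L w + 1 = qv g M L (mg g M L w) then M + jjw g M L w else M + jjw g M L w + 1

lemma M_le_blen (w : Fin L → Bool) : M ≤ blen g M L w := by
  unfold blen; split <;> omega

lemma blen_le (w : Fin L → Bool) : blen g M L w ≤ M + 2 ^ L := by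
  have h1 := jjw_lt g M L w
  have h2 := qv_le g M L (mg g M L w)
  unfold blen; split <;> omega

def bfun (w : Fin L → Bool) : ℕ → Bool := fun k =>
  if h : k < M then mg g M L w ⟨k, h⟩
  else if k = M + jjw g M L w ∧ jjw g M L w + 1 ≠ qv g M L (mg g M L w) then true else false

def sigF (x : Cs) : ℕ → Bool := fun i => if i < J - L then x (L + i) else x (N + L + i)

def outF (b : ℕ → Bool) (n : ℕ) (x : Cs) : Cs := fun k =>
  if k < n then b k
  else if k < J then sigF L N J x (k - n)
  else if k < J + N then x k
  else sigF L N J x (k - n - N)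

def sigI (n : ℕ) (y : Cs) : ℕ → Bool := fun i => if i < J - n then y (n + i) else y (n + N + i)

def inpF (w : Fin L → Bool) (n : ℕ) (y : Cs) : Cs := fun k =>
  if h : k < L then w ⟨k, h⟩
  else if k < J then sigI N J n y (k - L)
  else if k < J + N then y k
  else sigI N J n y (k - L - N)

-- evaluation lemmas
lemma outF_lt {b n x k} (hk : k < n) : outF L N J b n x k = b k := if_pos hk

lemma outF_mid {b n x k} (h1 : n ≤ k) (h2 : k < J) :
    outF L N J b n x k = sigF L N J x (k - n) := by
  unfold outF; rw [if_neg (by omega), if_pos h2]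

lemma outF_blk {b n x k} (hn : n ≤ J) (h1 : J ≤ k) (h2 : k < J + N) :
    outF L N J b n x k = x k := by
  unfold outF; rw [if_neg (by omega), if_neg (by omega), if_pos h2]

lemma outF_hi {b n x k} (hn : n ≤ J) (h1 : J + N ≤ k) :
    outF L N J b n x k = sigF L N J x (k - n - N) := by
  unfold outF; rw [if_neg (by omega), if_neg (by omega), if_neg (by omega)]

lemma inpF_lt {w n y k} (hk : k < L) : inpF L N J w n y k = w ⟨k, hk⟩ := dif_pos hk

lemma inpF_mid {w n y k} (hL : L ≤ J) (h1 : L ≤ k) (h2 : k < J) :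
    inpF L N J w n y k = sigI N J n y (k - L) := by
  unfold inpF; rw [dif_neg (by omega), if_pos h2]

lemma inpF_blk {w n y k} (hL : L ≤ J) (h1 : J ≤ k) (h2 : k < J + N) :
    inpF L N J w n y k = y k := by
  unfold inpF; rw [dif_neg (by omega), if_neg (by omega), if_pos h2]

lemma inpF_hi {w n y k} (hL : L ≤ J) (h1 : J + N ≤ k) :
    inpF L N J w n y k = sigI N J n y (k - L - N) := by
  unfold inpF; rw [dif_neg (by omega), if_neg (by omega), if_neg (by omega)]

lemma sigF_lo {x i} (h : i < J - L) : sigF L N J x i = x (L + i) := if_pos h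
lemma sigF_hi' {x i} (h : J - L ≤ i) : sigF L N J x i = x (N + L + i) := if_neg (by omega)
lemma sigI_lo {n y i} (h : i < J - n) : sigI N J n y i = y (n + i) := if_pos h
lemma sigI_hi' {n y i} (h : J - n ≤ i) : sigI N J n y i = y (n + N + i) := if_neg (by omega)

lemma inp_out (hLJ : L ≤ J) {n : ℕ} (hnJ : n ≤ J) (b : ℕ → Bool) (x : Cs)
    (w : Fin L → Bool) (hw : ∀ (k : ℕ) (h : k < L), w ⟨k, h⟩ = x k) :
    inpF L N J w n (outF L N J b n x) = x := by
  funext k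
  set y := outF L N J b n x with hy
  rcases lt_or_ge k L with hkL | hkL
  · rw [inpF_lt L N J hkL]; exact hw k hkL
  rcases lt_or_ge k J with hkJ | hkJ
  · rw [inpF_mid L N J hLJ hkL hkJ]
    set i := k - L with hi
    rcases lt_or_ge i (J - n) with hin | hin
    · rw [sigI_lo N J hin, hy, outF_mid L N J (by omega) (by omega)]
      rw [sigF_lo L N J (show n + i - n < J - L by omega)]
      exact congrArg x (by omega)
    · rw [sigI_hi' N J hin, hy, outF_hi L N J hnJ (by omega)]
      rw [sigF_lo L N J (show n + N + i - n - N < J - L by omega)]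
      exact congrArg x (by omega)
  rcases lt_or_ge k (J + N) with hkJN | hkJN
  · rw [inpF_blk L N J hLJ hkJ hkJN, hy, outF_blk L N J hnJ hkJ hkJN]
  · rw [inpF_hi L N J hLJ hkJN]
    set i := k - L - N with hi
    have hiJL : J - L ≤ i := by omega
    rcases lt_or_ge i (J - n) with hin | hin
    · rw [sigI_lo N J hin, hy, outF_mid L N J (by omega) (by omega)]
      rw [sigF_hi' L N J (show J - L ≤ n + i - n by omega)]
      exact congrArg x (by omega)
    · rw [sigI_hi' N J hin, hy, outF_hi L N J hnJ (by omega)]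
      rw [sigF_hi' L N J (show J - L ≤ n + N + i - n - N by omega)]
      exact congrArg x (by omega)

lemma out_inp (hLJ : L ≤ J) {n : ℕ} (hnJ : n ≤ J) (b : ℕ → Bool) (y : Cs)
    (w : Fin L → Bool) (hb : ∀ k, k < n → b k = y k) :
    outF L N J b n (inpF L N J w n y) = y := by
  funext k
  set x := inpF L N J w n y with hx
  rcases lt_or_ge k n with hkn | hkn
  · rw [outF_lt L N J hkn]; exact hb k hkn
  rcases lt_or_ge k J with hkJ | hkJ
  · rw [outF_mid L N J hkn hkJ]
    set i := k - n with hi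
    have hiJn : i < J - n := by omega
    rcases lt_or_ge i (J - L) with hiL | hiL
    · rw [sigF_lo L N J hiL, hx, inpF_mid L N J hLJ (by omega) (by omega)]
      rw [sigI_lo N J (show L + i - L < J - n by omega)]
      exact congrArg y (by omega)
    · rw [sigF_hi' L N J hiL, hx, inpF_hi L N J hLJ (by omega)]
      rw [sigI_lo N J (show N + L + i - L - N < J - n by omega)]
      exact congrArg y (by omega)
  rcases lt_or_ge k (J + N) with hkJN | hkJN
  · rw [outF_blk L N J hnJ hkJ hkJN, hx, inpF_blk L N J hLJ hkJ hkJN]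
  · rw [outF_hi L N J hnJ hkJN]
    set i := k - n - N with hi
    have hiJn : J - n ≤ i := by omega
    rcases lt_or_ge i (J - L) with hiL | hiL
    · rw [sigF_lo L N J hiL, hx, inpF_mid L N J hLJ (by omega) (by omega)]
      rw [sigI_hi' N J (show J - n ≤ L + i - L by omega)]
      exact congrArg y (by omega)
    · rw [sigF_hi' L N J hiL, hx, inpF_hi L N J hLJ (by omega)]
      rw [sigI_hi' N J (show J - n ≤ N + L + i - L - N by omega)]
      exact congrArg y (by omega)

end Constr


noncomputable section Decode

variable (g : HC) (M L N J : ℕ)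

def Pq (y : Cs) : ℕ → Prop := fun i =>
  y (M + i) = true ∨ i + 1 = qv g M L (truncF M y)

instance (y : Cs) : DecidablePred (Pq g M L y) := fun i => by
  unfold Pq; infer_instance

lemma Pq_ex {y : Cs} (hq : 0 < qv g M L (truncF M y)) : ∃ i, Pq g M L y i :=
  ⟨qv g M L (truncF M y) - 1, Or.inr (by omega)⟩

open scoped Classical in
def decJ (y : Cs) : ℕ :=
  if h : ∃ i, Pq g M L y i then Nat.find h else 0

lemma decJ_lt {y : Cs} (hq : 0 < qv g M L (truncF M y)) :
    decJ g M L y < qv g M L (truncF M y) := by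
  have hex := Pq_ex g M L hq
  rw [decJ, dif_pos hex]
  have := Nat.find_min' hex (Or.inr (show qv g M L (truncF M y) - 1 + 1 = _ by omega) :
    Pq g M L y (qv g M L (truncF M y) - 1))
  omega

lemma decJ_spec {y : Cs} (hq : 0 < qv g M L (truncF M y)) : Pq g M L y (decJ g M L y) := by
  have hex := Pq_ex g M L hq
  rw [decJ, dif_pos hex]
  exact Nat.find_spec hex

lemma decJ_min {y : Cs} (hq : 0 < qv g M L (truncF M y)) {i : ℕ} (hi : i < decJ g M L y) :
    ¬ Pq g M L y i := by
  have hex := Pq_ex g M L hq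
  rw [decJ, dif_pos hex] at hi
  exact Nat.find_min hex hi

def wdec (y : Cs) : Fin L → Bool :=
  if h : decJ g M L y < qv g M L (truncF M y) then
    ((Av g M L (truncF M y)).equivFin.symm ⟨decJ g M L y, h⟩).1
  else fun _ => false

lemma wdec_mem {y : Cs} (hq : 0 < qv g M L (truncF M y)) :
    wdec g M L y ∈ Av g M L (truncF M y) := by
  have hlt := decJ_lt g M L hq
  unfold wdec
  rw [dif_pos hlt]
  exact ((Av g M L (truncF M y)).equivFin.symm ⟨decJ g M L y, hlt⟩).2

lemma mg_wdec {y : Cs} (hq : 0 < qv g M L (truncF M y)) :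
    mg g M L (wdec g M L y) = truncF M y :=
  (Finset.mem_filter.1 (wdec_mem g M L hq)).2

lemma jjv_wdec {y : Cs} (hq : 0 < qv g M L (truncF M y))
    (h' : wdec g M L y ∈ Av g M L (truncF M y)) :
    jjv g M L (truncF M y) (wdec g M L y) h' = decJ g M L y := by
  have hlt := decJ_lt g M L hq
  have hsub : (⟨wdec g M L y, h'⟩ : {z // z ∈ Av g M L (truncF M y)}) =
      (Av g M L (truncF M y)).equivFin.symm ⟨decJ g M L y, hlt⟩ := by
    apply Subtype.ext
    show wdec g M L y = _
    unfold wdec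
    rw [dif_pos hlt]
  rw [jjv, hsub, Equiv.apply_symm_apply]

lemma jjw_wdec {y : Cs} (hq : 0 < qv g M L (truncF M y)) :
    jjw g M L (wdec g M L y) = decJ g M L y := by
  rw [jjw, jjv_congr g M L (mg_wdec g M L hq) _ (wdec_mem g M L hq)]
  exact jjv_wdec g M L hq _

lemma qv_mg_wdec {y : Cs} (hq : 0 < qv g M L (truncF M y)) :
    qv g M L (mg g M L (wdec g M L y)) = qv g M L (truncF M y) := by
  rw [mg_wdec g M L hq]

-- the bits of y below blen (wdec y) agree with the code of wdec y
lemma bfun_lt {w : Fin L → Bool} {k : ℕ} (h : k < M) :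
    bfun g M L w k = mg g M L w ⟨k, h⟩ := dif_pos h

lemma bfun_code {w : Fin L → Bool} {k : ℕ} (h : M ≤ k) :
    bfun g M L w k = if k = M + jjw g M L w ∧ jjw g M L w + 1 ≠ qv g M L (mg g M L w)
      then true else false := by
  unfold bfun
  rw [dif_neg (by omega)]

lemma bits_dec {y : Cs} (hq : 0 < qv g M L (truncF M y)) :
    ∀ k, k < blen g M L (wdec g M L y) → bfun g M L (wdec g M L y) k = y k := by
  intro k hk
  rcases lt_or_ge k M with hkM | hkM
  · rw [bfun_lt g M L hkM]
    exact congrFun (mg_wdec g M L hq) ⟨k, hkM⟩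
  · have hjq : jjw g M L (wdec g M L y) = decJ g M L y := jjw_wdec g M L hq
    have hqq : qv g M L (mg g M L (wdec g M L y)) = qv g M L (truncF M y) := qv_mg_wdec g M L hq
    have hb := hk
    rw [blen, hjq, hqq] at hb
    rw [bfun_code g M L hkM, hjq, hqq]
    have hfalse : ∀ i, i < decJ g M L y → y (M + i) = false := by
      intro i hi
      have hnp := decJ_min g M L hq hi
      rw [Pq] at hnp
      push_neg at hnp
      cases hy : y (M + i)
      · rfl
      · exact absurd hy hnp.1
    by_cases hc : decJ g M L y + 1 = qv g M L (truncF M y)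
    · rw [if_pos hc] at hb
      rw [if_neg (fun hx => hx.2 hc)]
      have h5 := hfalse (k - M) (by omega)
      rw [show M + (k - M) = k by omega] at h5
      exact h5.symm
    · rw [if_neg hc] at hb
      rcases Nat.lt_or_ge k (M + decJ g M L y) with hlt | hge
      · rw [if_neg (fun hx => by omega)]
        have h5 := hfalse (k - M) (by omega)
        rw [show M + (k - M) = k by omega] at h5
        exact h5.symm
      · have hke : k = M + decJ g M L y := by omega
        rw [if_pos ⟨hke, hc⟩]
        rcases decJ_spec g M L hq with h6 | h6
        · rw [hke]; exact h6.symm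
        · exact absurd h6 hc

-- decoding the output of outF
lemma truncM_out (w : Fin L → Bool) (x : Cs) :
    truncF M (outF L N J (bfun g M L w) (blen g M L w) x) = mg g M L w := by
  funext i
  have h1 : (i : ℕ) < blen g M L w := lt_of_lt_of_le i.2 (M_le_blen g M L w)
  show outF L N J (bfun g M L w) (blen g M L w) x i.1 = _
  rw [outF_lt L N J h1, bfun, dif_pos i.2]

lemma decJ_out (w : Fin L → Bool) (x : Cs) :
    decJ g M L (outF L N J (bfun g M L w) (blen g M L w) x) = jjw g M L w := by
  set y := outF L N J (bfun g M L w) (blen g M L w) x with hy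
  have htr : truncF M y = mg g M L w := truncM_out g M L N J w x
  have hex : ∃ i, Pq g M L y i := by
    refine ⟨qv g M L (truncF M y) - 1, Or.inr ?_⟩
    rw [htr]
    have := jjw_lt g M L w
    omega
  rw [decJ, dif_pos hex]
  rw [Nat.find_eq_iff hex]
  constructor
  · by_cases hc : jjw g M L w + 1 = qv g M L (mg g M L w)
    · right; rw [htr]; exact hc
    · left
      have hblen : M + jjw g M L w < blen g M L w := by rw [blen, if_neg hc]; omega
      rw [hy, outF_lt L N J hblen, bfun, dif_neg (by omega), if_pos ⟨rfl, hc⟩]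
  · intro i hi
    rw [Pq, htr]
    push_neg
    constructor
    · have hblen : M + i < blen g M L w := by
        have := M_le_blen g M L w
        rw [blen] at *
        split <;> omega
      rw [hy, outF_lt L N J hblen, bfun, dif_neg (by omega), if_neg (by omega)]
      exact Bool.false_ne_true
    · have := jjw_lt g M L w
      omega

lemma wdec_out (w : Fin L → Bool) (x : Cs) :
    wdec g M L (outF L N J (bfun g M L w) (blen g M L w) x) = w := by
  set y := outF L N J (bfun g M L w) (blen g M L w) x with hy
  have htr : truncF M y = mg g M L w := truncM_out g M L N J w x
  have hdj : decJ g M L y = jjw g M L w := decJ_out g M L N J w x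
  unfold wdec
  rw [htr, hdj, dif_pos (jjw_lt g M L w)]
  have : (⟨jjw g M L w, jjw_lt g M L w⟩ : Fin (qv g M L (mg g M L w))) =
      (Av g M L (mg g M L w)).equivFin ⟨w, mem_Av_self g M L w⟩ := by
    apply Fin.ext
    rfl
  exact (congrArg (fun z => ((Av g M L (mg g M L w)).equivFin.symm z).1) this).trans
    (congrArg Subtype.val (Equiv.symm_apply_apply _ _))

end Decode


noncomputable section Assemble

variable (g : HC) (M L N J : ℕ)

def hfwd (x : Cs) : Cs :=
  outF L N J (bfun g M L (truncF L x)) (blen g M L (truncF L x)) x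

def hbwd (y : Cs) : Cs :=
  inpF L N J (wdec g M L y) (blen g M L (wdec g M L y)) y

lemma truncF_hbwd (y : Cs) : truncF L (hbwd g M L N J y) = wdec g M L y := by
  funext i
  show inpF L N J _ _ y i.1 = _
  rw [inpF_lt L N J i.2]

lemma blen_le_J (hbJ : M + 2 ^ L ≤ J) (w : Fin L → Bool) : blen g M L w ≤ J :=
  le_trans (blen_le g M L w) hbJ

variable (hML : M ≤ L) (hLJ : L ≤ J) (hbJ : M + 2 ^ L ≤ J)
  (hmod : ∀ x y, Agree L x y → Agree M (g x) (g y))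

lemma hfwd_hbwd (hbJ : M + 2 ^ L ≤ J) (y : Cs) (hLJ : L ≤ J)
    (hq : 0 < qv g M L (truncF M y)) : hfwd g M L N J (hbwd g M L N J y) = y := by
  unfold hfwd
  rw [truncF_hbwd]
  unfold hbwd
  exact out_inp L N J hLJ (blen_le_J g M L J hbJ _) _ y _ (bits_dec g M L hq)

lemma hbwd_hfwd (hbJ : M + 2 ^ L ≤ J) (x : Cs) (hLJ : L ≤ J) : hbwd g M L N J (hfwd g M L N J x) = x := by
  unfold hfwd hbwd
  rw [wdec_out g M L N J]
  exact inp_out L N J hLJ (blen_le_J g M L J hbJ _) _ x _ (fun k h => rfl)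

lemma cont_hfwd : Continuous (hfwd g M L N J) := by
  have : hfwd g M L N J = fun x =>
      (fun w : Fin L → Bool => fun x' : Cs =>
        outF L N J (bfun g M L w) (blen g M L w) x') (truncF L x) x := rfl
  rw [this]
  apply cont_aux (e := truncF L)
    (F := fun (w : Fin L → Bool) (x' : Cs) => outF L N J (bfun g M L w) (blen g M L w) x')
    (continuous_pi fun i => continuous_apply i.1)
  intro w
  apply continuous_pi
  intro k
  unfold outF sigF
  split_ifs <;> first
    | exact continuous_const
    | exact continuous_apply _

include hML hLJ hbJ hmod in
lemma constr : ∃ h : HC, (∀ x, Agree M (h x) (g x)) ∧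
    (∀ x : Cs, ∀ k, k < N → h x (J + k) = x (J + k)) := by
  have hq : ∀ y : Cs, 0 < qv g M L (truncF M y) := fun y => qv_pos g M L hmod _
  refine ⟨Continuous.homeoOfEquivCompactToT2
    (f := ⟨hfwd g M L N J, hbwd g M L N J,
      fun x => hbwd_hfwd g M L N J hbJ x hLJ,
      fun y => hfwd_hbwd g M L N J hbJ y hLJ (hq y)⟩)
    (cont_hfwd g M L N J), ?_, ?_⟩
  · intro x k hk
    show hfwd g M L N J x k = g x k
    unfold hfwd
    rw [outF_lt L N J (lt_of_lt_of_le hk (M_le_blen g M L _)), bfun_lt g M L hk]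
    exact (mg_spec g M L x hmod ⟨k, hk⟩)
  · intro x k hk
    show hfwd g M L N J x (J + k) = x (J + k)
    unfold hfwd
    rw [outF_blk L N J (blen_le_J g M L J hbJ _) (Nat.le_add_right _ _) (by omega)]

end Assemble

noncomputable section Swap

def tau (N J k : ℕ) : ℕ :=
  if k < N then k + J else if J ≤ k ∧ k < J + N then k - J else k

lemma tau_invol {N J : ℕ} (hNJ : N ≤ J) (k : ℕ) : tau N J (tau N J k) = k := by
  unfold tau
  split_ifs <;> omega

def pswap (N J : ℕ) (hNJ : N ≤ J) : HC where
  toFun := fun x k => x (tau N J k)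
  invFun := fun x k => x (tau N J k)
  left_inv := fun x => funext fun k => congrArg x (tau_invol hNJ k)
  right_inv := fun x => funext fun k => congrArg x (tau_invol hNJ k)
  continuous_toFun := continuous_pi fun k => continuous_apply _
  continuous_invFun := continuous_pi fun k => continuous_apply _

lemma pswap_apply {N J : ℕ} (hNJ : N ≤ J) (x : Cs) (k : ℕ) :
    pswap N J hNJ x k = x (tau N J k) := rfl

lemma pswap_inv_apply {N J : ℕ} (hNJ : N ≤ J) (x : Cs) (k : ℕ) :
    ((pswap N J hNJ)⁻¹ : HC) x k = x (tau N J k) := rfl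

end Swap

section Key

lemma key (F : Finset HC) (U : Set HC) (hU : U ∈ 𝓝 (1 : HC)) (W : HC → Set HC)
    (hW : ∀ g ∈ F, W g ∈ 𝓝 g) :
    ∃ p : HC, ∃ u : HC → HC, ∀ g ∈ F, u g ∈ U ∧ p * u g * p⁻¹ ∈ W g := by
  classical
  obtain ⟨N, hN⟩ := exists_depth_G 1 hU
  have hMg : ∀ g ∈ F, ∃ Mg, ∀ h : HC, (∀ x, Agree Mg (h x) (g x)) → h ∈ W g :=
    fun g hg => exists_depth_G g (hW g hg)
  choose! Mg hMgs using hMg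
  set M := F.sup Mg with hM
  have hLg : ∀ g : HC, ∃ Lg, M ≤ Lg ∧ ∀ x y, Agree Lg x y → Agree M (g x) (g y) :=
    fun g => exists_modulus g g.continuous M
  choose Lg hLg1 hLg2 using hLg
  set L := max M (F.sup Lg) with hL
  have hmod : ∀ g ∈ F, ∀ x y, Agree L x y → Agree M (g x) (g y) := by
    intro g hg x y hxy
    exact hLg2 g x y (hxy.mono (le_trans (Finset.le_sup hg) (le_max_right _ _)))
  set J := L + M + 2 ^ L + N with hJ
  have h2L : 0 < 2 ^ L := Nat.two_pow_pos L
  have hNJ : N ≤ J := by omega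
  have hML : M ≤ L := le_max_left _ _
  have hLJ : L ≤ J := by omega
  have hbJ : M + 2 ^ L ≤ J := by omega
  set p := pswap N J hNJ with hp
  have hcon : ∀ g ∈ F, ∃ h : HC, (∀ x, Agree M (h x) (g x)) ∧
      (∀ x : Cs, ∀ k, k < N → h x (J + k) = x (J + k)) :=
    fun g hg => constr g M L N J hML hLJ hbJ (hmod g hg)
  choose! hh hh1 hh2 using hcon
  refine ⟨p, fun g => p⁻¹ * hh g * p, fun g hg => ?_⟩
  constructor
  · apply hN
    intro x k hk
    rw [one_apply]
    have e1 : (p⁻¹ * hh g * p) x = (p⁻¹ : HC) (hh g (p x)) := rfl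
    rw [e1, inv_apply]
    have e2 : p.symm (hh g (p x)) k = hh g (p x) (tau N J k) := rfl
    rw [e2]
    have htk : tau N J k = k + J := by unfold tau; rw [if_pos hk]
    rw [htk, show k + J = J + k by omega, hh2 g hg (p x) k hk]
    rw [pswap_apply hNJ x (J + k)]
    have : tau N J (J + k) = k := by unfold tau; split_ifs <;> omega
    rw [this]
  · have hconj : p * (p⁻¹ * hh g * p) * p⁻¹ = hh g := by
      group
    rw [hconj]
    apply hMgs g hg
    intro x
    exact (hh1 g hg x).mono (Finset.le_sup hg)

end Key

end Statement19Aux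

variable (G : Type) [Group G] [TopologicalSpace G]

namespace Statement19Aux

section Flow

variable {X : Type} [UniformSpace X] [CompactSpace X] [T2Space X]
  [MulAction HC X] [ContinuousSMul HC X]

lemma almost_fixed (hSUC : IsSUCFlow HC X) (y₀ : X) (F : Finset HC)
    (V : Set (X × X)) (hV : V ∈ uniformity X) :
    ∃ w : X, ∀ g ∈ F, (g • w, w) ∈ closure V := by
  classical
  obtain ⟨U, hU, hSU⟩ := hSUC y₀ V hV
  let κ := {W : HC → Set HC // ∀ g : HC, W g ∈ 𝓝 g}
  let S : κ → Set X := fun W =>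
    {x | ∃ p : HC, ∃ u : HC → HC,
      (∀ g ∈ F, u g ∈ U ∧ p * u g * p⁻¹ ∈ W.1 g) ∧ x = p • y₀}
  let B : κ → Set X := fun W => closure (S W)
  have hBne : ∀ Wk : κ, (B Wk).Nonempty := by
    intro Wk
    obtain ⟨p, u, hpu⟩ := key F U hU Wk.1 (fun g _ => Wk.2 g)
    exact ⟨p • y₀, subset_closure ⟨p, u, hpu, rfl⟩⟩
  have hBdir : Directed (· ⊇ ·) B := by
    intro W1 W2
    refine ⟨⟨fun g => W1.1 g ∩ W2.1 g, fun g => Filter.inter_mem (W1.2 g) (W2.2 g)⟩,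
      closure_mono ?_, closure_mono ?_⟩
    · rintro x ⟨p, u, hpu, hx⟩
      exact ⟨p, u, fun g hg => ⟨(hpu g hg).1, ((hpu g hg).2).1⟩, hx⟩
    · rintro x ⟨p, u, hpu, hx⟩
      exact ⟨p, u, fun g hg => ⟨(hpu g hg).1, ((hpu g hg).2).2⟩, hx⟩
  have hκ : Nonempty κ := ⟨⟨fun _ => Set.univ, fun _ => Filter.univ_mem⟩⟩
  obtain ⟨w, hw⟩ := IsCompact.nonempty_iInter_of_directed_nonempty_isCompact_isClosed B hBdir
    hBne (fun _ => isClosed_closure.isCompact) (fun _ => isClosed_closure)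
  refine ⟨w, fun g hg => ?_⟩
  rw [mem_closure_iff_nhds]
  intro t ht
  rw [mem_nhds_prod_iff] at ht
  obtain ⟨Ω₁, hΩ₁, Ω₂, hΩ₂, hsub⟩ := ht
  have hcont : Filter.Tendsto (fun q : HC × X => q.1 • q.2) (𝓝 (g, w)) (𝓝 (g • w)) :=
    continuous_smul.tendsto (g, w)
  have hpre := hcont hΩ₁
  rw [nhds_prod_eq, Filter.mem_map, Filter.mem_prod_iff] at hpre
  obtain ⟨Wg, hWg, Vw, hVw, hsub2⟩ := hpre
  have hWkp : ∀ g' : HC, (if g' = g then Wg else Set.univ) ∈ 𝓝 g' := by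
    intro g'
    split
    · next hgg => subst hgg; exact hWg
    · exact Filter.univ_mem
  let Wk : κ := ⟨fun g' => if g' = g then Wg else Set.univ, hWkp⟩
  have hwB : w ∈ B Wk := Set.mem_iInter.1 hw Wk
  rw [mem_closure_iff_nhds] at hwB
  obtain ⟨x', hx'⟩ := hwB (Vw ∩ Ω₂) (Filter.inter_mem hVw hΩ₂)
  obtain ⟨⟨hxV, hxΩ⟩, p, u, hpu, rfl⟩ := hx'
  have hug := hpu g hg
  have hWgmem : p * u g * p⁻¹ ∈ Wg := by
    have h2 := hug.2
    have hite : (if g = g then Wg else Set.univ) = Wg := if_pos rfl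
    have h3 : (Wk.1 g) = Wg := hite
    rwa [h3] at h2
  have hsmul : (p * u g * p⁻¹) • (p • y₀) ∈ Ω₁ :=
    hsub2 (Set.mk_mem_prod hWgmem hxV)
  have hcompute : (p * u g * p⁻¹) • (p • y₀) = p • (u g • y₀) := by
    rw [smul_smul, smul_smul]
    congr 1
    group
  have hpair : (p • (u g • y₀), p • y₀) ∈ V := hSU p (u g) hug.1
  refine ⟨(p • (u g • y₀), p • y₀), hsub (Set.mk_mem_prod ?_ hxΩ), hpair⟩
  rw [← hcompute]
  exact hsmul

end Flow

end Statement19Aux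

/-- The group `H(C)` of homeomorphisms of the Cantor space has the SUC
fixed point property: every nonempty compact SUC `H(C)`-flow has a fixed point. -/
theorem statement19 (X : Type) [UniformSpace X] [CompactSpace X] [T2Space X] [Nonempty X]
    [MulAction (CantorSpace ≃ₜ CantorSpace) X]
    [ContinuousSMul (CantorSpace ≃ₜ CantorSpace) X]
    (hSUC : IsSUCFlow (CantorSpace ≃ₜ CantorSpace) X) :
    ∃ x : X, ∀ g : CantorSpace ≃ₜ CantorSpace, g • x = x := by
  classical
  open Statement19Aux in
  obtain ⟨y₀⟩ := ‹Nonempty X›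
  have hcontg : ∀ g : Statement19Aux.HC, Continuous fun x : X => ((g • x, x) : X × X) :=
    fun g => (continuous_const.smul continuous_id).prodMk continuous_id
  let ι := Finset Statement19Aux.HC × {V : Set (X × X) // V ∈ uniformity X}
  have hι : Nonempty ι := ⟨⟨∅, ⟨Set.univ, Filter.univ_mem⟩⟩⟩
  let Z : ι → Set X := fun i => {x | ∀ g ∈ i.1, (g • x, x) ∈ closure i.2.1}
  have hZcl : ∀ i, IsClosed (Z i) := by
    intro i
    have hrw : Z i = ⋂ g ∈ i.1, (fun x : X => ((g • x, x) : X × X)) ⁻¹' closure i.2.1 := by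
      ext x
      simp only [Z, Set.mem_setOf_eq, Set.mem_iInter, Set.mem_preimage]
    rw [hrw]
    exact isClosed_biInter fun g _ => isClosed_closure.preimage (hcontg g)
  have hZne : ∀ i, (Z i).Nonempty := by
    intro i
    obtain ⟨w, hw⟩ := Statement19Aux.almost_fixed hSUC y₀ i.1 i.2.1 i.2.2
    exact ⟨w, hw⟩
  have hZdir : Directed (· ⊇ ·) Z := by
    intro i j
    refine ⟨⟨i.1 ∪ j.1, ⟨i.2.1 ∩ j.2.1, Filter.inter_mem i.2.2 j.2.2⟩⟩, ?_, ?_⟩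
    · intro x hx g hg
      exact closure_mono Set.inter_subset_left (hx g (Finset.mem_union_left _ hg))
    · intro x hx g hg
      exact closure_mono Set.inter_subset_right (hx g (Finset.mem_union_right _ hg))
  obtain ⟨w, hw⟩ := IsCompact.nonempty_iInter_of_directed_nonempty_isCompact_isClosed Z hZdir
    hZne (fun i => (hZcl i).isCompact) hZcl
  refine ⟨w, fun g => ?_⟩
  apply eq_of_uniformity_basis uniformity_hasBasis_closure
  intro V hV
  exact Set.mem_iInter.1 hw ⟨{g}, ⟨V, hV⟩⟩ g (Finset.mem_singleton_self g)
end
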